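/- arXiv:2105.01247 — 3 statements merged into one kernel-verified Lean document; each statement's English description precedes it below -/
import Mathlib

section
/- Every bounded linear operator from C(K) (K compact Hausdorff) into a Hilbert space H is absolutely 2-summing. -/
open scoped BigOperators
open MeasureTheory

noncomputable section

/-- The `n`-th approximation number of a bounded operator. On a Hilbert space these
coincide with the singular values of a compact operator, and summability of their `p`-th
powers forces compactness, so membership in the Schatten class `S_p` can be phrased
through them. -/
noncomputable def approxNumber {X Y : Type*} [NormedAddCommGroup X] [NormedSpace ℂ X]
    [NormedAddCommGroup Y] [NormedSpace ℂ Y] (T : X →L[ℂ] Y) (n : ℕ) : ℝ :=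
  sInf {c : ℝ | ∃ F : X →L[ℂ] Y,
    Module.finrank ℂ (LinearMap.range (F : X →ₗ[ℂ] Y)) ≤ n ∧ c = ‖T - F‖}

/-- Membership in the Schatten–von Neumann class `S_p`. -/
def MemSchatten {X Y : Type*} [NormedAddCommGroup X] [NormedSpace ℂ X]
    [NormedAddCommGroup Y] [NormedSpace ℂ Y] (p : ℝ) (T : X →L[ℂ] Y) : Prop :=
  Summable fun n : ℕ => approxNumber T n ^ p

/-- The Schatten `p`-quasinorm `σ_p`. -/
noncomputable def schattenNorm {X Y : Type*} [NormedAddCommGroup X] [NormedSpace ℂ X]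
    [NormedAddCommGroup Y] [NormedSpace ℂ Y] (p : ℝ) (T : X →L[ℂ] Y) : ℝ :=
  (∑' n : ℕ, approxNumber T n ^ p) ^ (1 / p)

/-- `T` is `s`-nuclear: `T x = ∑ₖ ⟨x'ₖ, x⟩ yₖ` with `∑ₖ ‖x'ₖ‖^s ‖yₖ‖^s < ∞`. -/
def IsNuclearS (s : ℝ) {X Y : Type*} [NormedAddCommGroup X] [NormedSpace ℂ X]
    [NormedAddCommGroup Y] [NormedSpace ℂ Y] (T : X →L[ℂ] Y) : Prop :=
  ∃ (x' : ℕ → (X →L[ℂ] ℂ)) (y : ℕ → Y),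
    (Summable fun k => ‖x' k‖ ^ s * ‖y k‖ ^ s) ∧
    ∀ x : X, HasSum (fun k => x' k x • y k) (T x)

/-- The `s`-nuclear quasinorm `ν_s`. -/
noncomputable def nuclearQuasinorm (s : ℝ) {X Y : Type*} [NormedAddCommGroup X]
    [NormedSpace ℂ X] [NormedAddCommGroup Y] [NormedSpace ℂ Y] (T : X →L[ℂ] Y) : ℝ :=
  sInf {c : ℝ | ∃ (x' : ℕ → (X →L[ℂ] ℂ)) (y : ℕ → Y),
    (Summable fun k => ‖x' k‖ ^ s * ‖y k‖ ^ s) ∧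
    (∀ x : X, HasSum (fun k => x' k x • y k) (T x)) ∧
    c = (∑' k : ℕ, ‖x' k‖ ^ s * ‖y k‖ ^ s) ^ (1 / s)}

/-- `A` is absolutely 2-summing. -/
def IsAbs2Summing {X Y : Type*} [NormedAddCommGroup X] [NormedSpace ℂ X]
    [NormedAddCommGroup Y] [NormedSpace ℂ Y] (A : X →L[ℂ] Y) : Prop :=
  ∃ C : ℝ, 0 ≤ C ∧ ∀ (n : ℕ) (x : Fin n → X) (M : ℝ), 0 ≤ M →
    (∀ x' : X →L[ℂ] ℂ, ‖x'‖ ≤ 1 → ∑ i, ‖x' (x i)‖ ^ 2 ≤ M ^ 2) →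
    ∑ i, ‖A (x i)‖ ^ 2 ≤ C ^ 2 * M ^ 2

/-- The 2-summing norm `π₂`. -/
noncomputable def pi2Norm {X Y : Type*} [NormedAddCommGroup X] [NormedSpace ℂ X]
    [NormedAddCommGroup Y] [NormedSpace ℂ Y] (A : X →L[ℂ] Y) : ℝ :=
  sInf {C : ℝ | 0 ≤ C ∧ ∀ (n : ℕ) (x : Fin n → X) (M : ℝ), 0 ≤ M →
    (∀ x' : X →L[ℂ] ℂ, ‖x'‖ ≤ 1 → ∑ i, ‖x' (x i)‖ ^ 2 ≤ M ^ 2) →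
    ∑ i, ‖A (x i)‖ ^ 2 ≤ C ^ 2 * M ^ 2}

/-- The algebraic multiplicity of `lam` as an eigenvalue of `T`: the dimension of the
generalized eigenspace `⋃ₙ ker (lam - T)ⁿ`. -/
noncomputable def algMult {X : Type*} [NormedAddCommGroup X] [NormedSpace ℂ X]
    (T : X →L[ℂ] X) (lam : ℂ) : ℕ :=
  Module.finrank ℂ
    ↥(⨆ n : ℕ, LinearMap.ker
      ((((lam • ContinuousLinearMap.id ℂ X - T) ^ n : X →L[ℂ] X)) : X →ₗ[ℂ] X))

/-- The sequence of eigenvalues of `T`, repeated according to algebraic multiplicities,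
belongs to `ℓ_p`. -/
def EigSeqMem (p : ℝ) {X : Type*} [NormedAddCommGroup X] [NormedSpace ℂ X]
    (T : X →L[ℂ] X) : Prop :=
  ∃ μ : ℕ → ℂ,
    (∀ lam : ℂ, lam ≠ 0 → Nat.card {n : ℕ | μ n = lam} = algMult T lam) ∧
    Summable fun n => ‖μ n‖ ^ p

/-- `γ_{S_r}(T)`: the infimum of `‖A‖ σ_r(U) ‖B‖` over all factorizations `T = B U A`
through an operator `U ∈ S_r(H)` on a Hilbert space `H`. -/
noncomputable def gammaS {X Y : Type*} [NormedAddCommGroup X] [NormedSpace ℂ X]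
    [NormedAddCommGroup Y] [NormedSpace ℂ Y] (r : ℝ) (T : X →L[ℂ] Y) : ℝ :=
  sInf {c : ℝ | ∃ (H : Type) (iN : NormedAddCommGroup H)
    (iP : InnerProductSpace ℂ H) (iC : CompleteSpace H)
    (A : X →L[ℂ] H) (U : H →L[ℂ] H) (B : H →L[ℂ] Y),
    MemSchatten r U ∧ T = B.comp (U.comp A) ∧ c = ‖A‖ * schattenNorm r U * ‖B‖}

end

set_option maxHeartbeats 1000000

open Finset ComplexConjugate

namespace LGTaux

noncomputable def sgn (k : Fin 4) : ℂ := ![1, Complex.I, -1, -Complex.I] k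

lemma sgn_mul_conj (k : Fin 4) : sgn k * conj (sgn k) = 1 := by
  fin_cases k <;> simp [sgn, Complex.mul_conj', Complex.ext_iff] <;> norm_num

lemma norm_sgn (k : Fin 4) : ‖sgn k‖ = 1 := by
  fin_cases k <;> simp [sgn]

lemma powsum {a b : ℕ} (ha : a ≤ 2) (hb : b ≤ 2) :
    ∑ k : Fin 4, sgn k ^ a * (conj (sgn k)) ^ b = if a = b then 4 else 0 := by
  interval_cases a <;> interval_cases b <;>
    simp [Fin.sum_univ_four, sgn, Complex.ext_iff] <;> norm_num

end LGTaux

namespace LGTaux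

lemma sum_prod_eval {n : ℕ} (g : Fin n → Fin 4 → ℂ) :
    ∑ ε : Fin n → Fin 4, ∏ i, g i (ε i) = ∏ i, ∑ k, g i k := by
  classical
  rw [Finset.prod_univ_sum]
  rw [Fintype.piFinset_univ]

lemma moment4 {n : ℕ} (i j k l : Fin n) :
    ∑ ε : Fin n → Fin 4, sgn (ε i) * conj (sgn (ε j)) * (sgn (ε k) * conj (sgn (ε l)))
      = if (i = j ∧ k = l) ∨ (i = l ∧ k = j) then (4 : ℂ) ^ n else 0 := by
  classical
  set α : Fin n → ℕ := fun r => (if r = i then 1 else 0) + (if r = k then 1 else 0) with hα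
  set β : Fin n → ℕ := fun r => (if r = j then 1 else 0) + (if r = l then 1 else 0) with hβ
  have hexp : ∀ ε : Fin n → Fin 4,
      sgn (ε i) * conj (sgn (ε j)) * (sgn (ε k) * conj (sgn (ε l)))
        = ∏ r, sgn (ε r) ^ α r * (conj (sgn (ε r))) ^ β r := by
    intro ε
    have h1 : ∀ r : Fin n, sgn (ε r) ^ α r * (conj (sgn (ε r))) ^ β r
        = ((if r = i then sgn (ε r) else 1) * (if r = k then sgn (ε r) else 1)) *
          ((if r = j then conj (sgn (ε r)) else 1) * (if r = l then conj (sgn (ε r)) else 1)) := by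
      intro r
      simp only [hα, hβ, pow_add, pow_ite, pow_one, pow_zero]
    rw [Finset.prod_congr rfl (fun r _ => h1 r)]
    rw [Finset.prod_mul_distrib, Finset.prod_mul_distrib, Finset.prod_mul_distrib]
    simp [Finset.prod_ite_eq']
    ring
  calc ∑ ε : Fin n → Fin 4, sgn (ε i) * conj (sgn (ε j)) * (sgn (ε k) * conj (sgn (ε l)))
      = ∑ ε : Fin n → Fin 4, ∏ r, sgn (ε r) ^ α r * (conj (sgn (ε r))) ^ β r := by
        exact Finset.sum_congr rfl (fun ε _ => hexp ε)
    _ = ∏ r, ∑ t, sgn t ^ α r * (conj (sgn t)) ^ β r := sum_prod_eval (fun r t => sgn t ^ α r * (conj (sgn t)) ^ β r)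
    _ = ∏ r : Fin n, if α r = β r then (4:ℂ) else 0 := by
        refine Finset.prod_congr rfl (fun r _ => ?_)
        refine powsum ?_ ?_ <;> simp only [hα, hβ] <;> split <;> split <;> omega
    _ = if (i = j ∧ k = l) ∨ (i = l ∧ k = j) then (4 : ℂ) ^ n else 0 := by
        by_cases hP : (i = j ∧ k = l) ∨ (i = l ∧ k = j)
        · rw [if_pos hP]
          have hαβ : ∀ r, α r = β r := by
            rcases hP with ⟨h1, h2⟩ | ⟨h1, h2⟩ <;> intro r <;> subst h1 <;> subst h2 <;>
              simp only [hα, hβ] <;> omega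
          calc ∏ r : Fin n, (if α r = β r then (4:ℂ) else 0)
              = ∏ _r : Fin n, (4:ℂ) := Finset.prod_congr rfl (fun r _ => by rw [if_pos (hαβ r)])
            _ = (4:ℂ) ^ n := by simp
        · rw [if_neg hP]
          push_neg at hP
          obtain ⟨hP1, hP2⟩ := hP
          have hr : ∃ r, α r ≠ β r := by
            by_cases hij : i = j
            · have hkl : k ≠ l := hP1 hij
              refine ⟨k, ?_⟩
              simp only [hα, hβ]
              rcases eq_or_ne k i with h | h <;> rcases eq_or_ne k j with h2 | h2 <;>
                simp only [h, h2, if_pos rfl, if_neg, hkl, ← hij] <;> simp_all <;> omega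
            · by_cases hil : i = l
              · have hkj : k ≠ j := hP2 hil
                refine ⟨k, ?_⟩
                simp only [hα, hβ]
                rcases eq_or_ne k i with h | h <;> rcases eq_or_ne k l with h2 | h2 <;>
                  simp only [h, h2, if_pos rfl, if_neg, hkj, ← hil] <;> simp_all <;> omega
              · refine ⟨i, ?_⟩
                simp only [hα, hβ]
                rcases eq_or_ne i k with h | h <;>
                  simp only [h, if_pos rfl, if_neg, hij, hil] <;> simp_all
          obtain ⟨r, hr⟩ := hr
          exact Finset.prod_eq_zero (Finset.mem_univ r) (by rw [if_neg hr])

end LGTaux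

namespace LGTaux

lemma moment2 {n : ℕ} (i j : Fin n) :
    ∑ ε : Fin n → Fin 4, conj (sgn (ε i)) * sgn (ε j)
      = if i = j then (4 : ℂ) ^ n else 0 := by
  have h := moment4 j i i i
  have heq : ∀ ε : Fin n → Fin 4,
      sgn (ε j) * conj (sgn (ε i)) * (sgn (ε i) * conj (sgn (ε i)))
        = conj (sgn (ε i)) * sgn (ε j) := by
    intro ε
    calc sgn (ε j) * conj (sgn (ε i)) * (sgn (ε i) * conj (sgn (ε i)))
        = conj (sgn (ε i)) * sgn (ε j) * (sgn (ε i) * conj (sgn (ε i))) := by ring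
      _ = conj (sgn (ε i)) * sgn (ε j) := by rw [sgn_mul_conj, mul_one]
  rw [Finset.sum_congr rfl (fun ε _ => heq ε)] at h
  rw [h]
  by_cases hji : j = i
  · simp [hji]
  · rw [if_neg (by tauto), if_neg (fun hh => hji hh.symm)]

lemma moment2' {n : ℕ} (i j : Fin n) :
    ∑ ε : Fin n → Fin 4, sgn (ε i) * conj (sgn (ε j))
      = if i = j then (4 : ℂ) ^ n else 0 := by
  have h := moment2 j i
  rw [Finset.sum_congr rfl (fun ε _ => mul_comm (conj (sgn (ε j))) (sgn (ε i)))] at h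
  rw [h]
  by_cases hji : j = i
  · simp [hji]
  · rw [if_neg hji, if_neg (fun hh => hji hh.symm)]

end LGTaux

namespace LGTaux

lemma mul_conj_self (z : ℂ) : z * conj z = ((‖z‖ ^ 2 : ℝ) : ℂ) := by
  rw [Complex.mul_conj, Complex.normSq_eq_norm_sq]

lemma sumZ2 {n : ℕ} (a : Fin n → ℂ) :
    ∑ ε : Fin n → Fin 4, ‖∑ i, a i * sgn (ε i)‖ ^ 2 = 4 ^ n * ∑ i, ‖a i‖ ^ 2 := by
  have hc : ∑ ε : Fin n → Fin 4,
      (∑ i, a i * sgn (ε i)) * conj (∑ j, a j * sgn (ε j))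
      = (4 : ℂ) ^ n * ∑ i, a i * conj (a i) := by
    have hexp : ∀ ε : Fin n → Fin 4,
        (∑ i, a i * sgn (ε i)) * conj (∑ j, a j * sgn (ε j))
        = ∑ i, ∑ j, a i * conj (a j) * (sgn (ε i) * conj (sgn (ε j))) := by
      intro ε
      rw [map_sum, Finset.sum_mul_sum]
      refine Finset.sum_congr rfl (fun i _ => Finset.sum_congr rfl (fun j _ => ?_))
      rw [map_mul]
      ring
    rw [Finset.sum_congr rfl (fun ε _ => hexp ε)]
    rw [Finset.sum_comm]
    have hswap : ∀ i : Fin n, ∑ ε : Fin n → Fin 4, ∑ j,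
        a i * conj (a j) * (sgn (ε i) * conj (sgn (ε j)))
        = ∑ j, a i * conj (a j) * (if i = j then (4:ℂ)^n else 0) := by
      intro i
      rw [Finset.sum_comm]
      refine Finset.sum_congr rfl (fun j _ => ?_)
      rw [← Finset.mul_sum, moment2' i j]
    rw [Finset.sum_congr rfl (fun i _ => hswap i)]
    rw [Finset.mul_sum]
    refine Finset.sum_congr rfl (fun i _ => ?_)
    simp only [mul_ite, mul_zero, Finset.sum_ite_eq, Finset.mem_univ, if_true]
    ring
  have hre : ∀ ε : Fin n → Fin 4,
      (∑ i, a i * sgn (ε i)) * conj (∑ j, a j * sgn (ε j))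
        = ((‖∑ i, a i * sgn (ε i)‖ ^ 2 : ℝ) : ℂ) := fun ε => mul_conj_self _
  rw [Finset.sum_congr rfl (fun ε _ => hre ε)] at hc
  have hra : ∀ i, a i * conj (a i) = ((‖a i‖ ^ 2 : ℝ) : ℂ) := fun i => mul_conj_self _
  rw [Finset.sum_congr rfl (fun i _ => hra i)] at hc
  rw [← Complex.ofReal_sum, ← Complex.ofReal_sum] at hc
  have : ((∑ ε : Fin n → Fin 4, ‖∑ i, a i * sgn (ε i)‖ ^ 2 : ℝ) : ℂ)
      = (((4:ℝ) ^ n * ∑ i, ‖a i‖ ^ 2 : ℝ) : ℂ) := by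
    rw [hc]; push_cast; ring
  exact_mod_cast this

end LGTaux


namespace LGTaux

lemma sumZ4 {n : ℕ} (a : Fin n → ℂ) :
    ∑ ε : Fin n → Fin 4, (‖∑ i, a i * sgn (ε i)‖ ^ 2) ^ 2
      ≤ 2 * 4 ^ n * (∑ i, ‖a i‖ ^ 2) ^ 2 := by
  set Z : (Fin n → Fin 4) → ℂ := fun ε => ∑ i, a i * sgn (ε i) with hZ
  have hexp2 : ∀ ε, Z ε * conj (Z ε)
      = ∑ i, ∑ j, a i * conj (a j) * (sgn (ε i) * conj (sgn (ε j))) := by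
    intro ε
    rw [hZ]
    simp only []
    rw [map_sum, Finset.sum_mul_sum]
    refine Finset.sum_congr rfl (fun i _ => Finset.sum_congr rfl (fun j _ => ?_))
    rw [map_mul]
    ring
  have hc : ∑ ε : Fin n → Fin 4, (Z ε * conj (Z ε)) * (Z ε * conj (Z ε))
      = ∑ i, ∑ j, ∑ k, ∑ l, (a i * conj (a j) * (a k * conj (a l))) *
          (if (i = j ∧ k = l) ∨ (i = l ∧ k = j) then (4:ℂ)^n else 0) := by
    have hpt : ∀ ε, (Z ε * conj (Z ε)) * (Z ε * conj (Z ε))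
        = ∑ i, ∑ j, ∑ k, ∑ l, (a i * conj (a j) * (a k * conj (a l))) *
            (sgn (ε i) * conj (sgn (ε j)) * (sgn (ε k) * conj (sgn (ε l)))) := by
      intro ε
      rw [hexp2]
      simp only [Finset.sum_mul, Finset.mul_sum]
      refine Finset.sum_congr rfl (fun i _ => Finset.sum_congr rfl (fun j _ => ?_))
      refine Finset.sum_congr rfl (fun k _ => Finset.sum_congr rfl (fun l _ => ?_))
      ring
    rw [Finset.sum_congr rfl (fun ε _ => hpt ε)]
    rw [Finset.sum_comm]
    refine Finset.sum_congr rfl (fun i _ => ?_)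
    rw [Finset.sum_comm]
    refine Finset.sum_congr rfl (fun j _ => ?_)
    rw [Finset.sum_comm]
    refine Finset.sum_congr rfl (fun k _ => ?_)
    rw [Finset.sum_comm]
    refine Finset.sum_congr rfl (fun l _ => ?_)
    rw [← Finset.mul_sum, moment4 i j k l]
  have hlhs : ∀ ε, (Z ε * conj (Z ε)) * (Z ε * conj (Z ε))
      = (((‖Z ε‖ ^ 2) ^ 2 : ℝ) : ℂ) := by
    intro ε
    rw [mul_conj_self]
    push_cast
    ring
  rw [Finset.sum_congr rfl (fun ε _ => hlhs ε), ← Complex.ofReal_sum] at hc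
  have hre : ∑ ε : Fin n → Fin 4, (‖Z ε‖ ^ 2) ^ 2
      = ∑ i, ∑ j, ∑ k, ∑ l, ((a i * conj (a j) * (a k * conj (a l))) *
          (if (i = j ∧ k = l) ∨ (i = l ∧ k = j) then (4:ℂ)^n else 0)).re := by
    have := congrArg Complex.re hc
    simpa only [Complex.ofReal_re, Complex.re_sum] using this
  rw [hre]
  have hterm : ∀ i j k l : Fin n,
      ((a i * conj (a j) * (a k * conj (a l))) *
          (if (i = j ∧ k = l) ∨ (i = l ∧ k = j) then (4:ℂ)^n else 0)).re
      ≤ (4:ℝ)^n * ((if i = j ∧ k = l then ‖a i‖^2 * ‖a k‖^2 else 0)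
          + (if i = l ∧ k = j then ‖a i‖^2 * ‖a k‖^2 else 0)) := by
    intro i j k l
    have h4nn : (0:ℝ) ≤ (4:ℝ)^n := by positivity
    by_cases h1 : i = j ∧ k = l
    · obtain ⟨rfl, rfl⟩ : i = j ∧ k = l := h1
      rw [if_pos (Or.inl ⟨rfl, rfl⟩), if_pos ⟨rfl, rfl⟩]
      have hval : a i * conj (a i) * (a k * conj (a k)) * (4:ℂ)^n
          = ((‖a i‖^2 * ‖a k‖^2 * 4^n : ℝ) : ℂ) := by
        rw [mul_conj_self, mul_conj_self]
        push_cast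
        ring
      rw [hval, Complex.ofReal_re]
      have hnn2 : (0:ℝ) ≤ if i = k ∧ k = i then ‖a i‖^2 * ‖a k‖^2 else 0 := by
        split
        · positivity
        · exact le_refl _
      nlinarith
    · by_cases h2 : i = l ∧ k = j
      · obtain ⟨rfl, rfl⟩ : i = l ∧ k = j := h2
        rw [if_pos (Or.inr ⟨rfl, rfl⟩), if_neg h1, if_pos ⟨rfl, rfl⟩]
        have hval : a i * conj (a k) * (a k * conj (a i)) * (4:ℂ)^n
            = ((‖a i‖^2 * ‖a k‖^2 * 4^n : ℝ) : ℂ) := by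
          rw [show a i * conj (a k) * (a k * conj (a i))
              = (a i * conj (a i)) * (a k * conj (a k)) by ring,
            mul_conj_self, mul_conj_self]
          push_cast
          ring
        rw [hval, Complex.ofReal_re]
        nlinarith
      · rw [if_neg (by tauto), if_neg h1, if_neg h2]
        simp
  calc ∑ i, ∑ j, ∑ k, ∑ l, ((a i * conj (a j) * (a k * conj (a l))) *
          (if (i = j ∧ k = l) ∨ (i = l ∧ k = j) then (4:ℂ)^n else 0)).re
      ≤ ∑ i, ∑ j, ∑ k, ∑ l, (4:ℝ)^n * ((if i = j ∧ k = l then ‖a i‖^2 * ‖a k‖^2 else 0)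
          + (if i = l ∧ k = j then ‖a i‖^2 * ‖a k‖^2 else 0)) := by
        refine Finset.sum_le_sum (fun i _ => Finset.sum_le_sum (fun j _ => ?_))
        refine Finset.sum_le_sum (fun k _ => Finset.sum_le_sum (fun l _ => ?_))
        exact hterm i j k l
    _ = 2 * 4 ^ n * (∑ i, ‖a i‖ ^ 2) ^ 2 := by
        have e1 : ∑ i : Fin n, ∑ j : Fin n, ∑ k : Fin n, ∑ l : Fin n,
            (if i = j ∧ k = l then ‖a i‖^2 * ‖a k‖^2 else 0)
            = (∑ i, ‖a i‖ ^ 2) ^ 2 := by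
          have h1 : ∀ i j : Fin n, ∑ k : Fin n, ∑ l : Fin n,
              (if i = j ∧ k = l then ‖a i‖^2 * ‖a k‖^2 else 0)
              = if i = j then ∑ k : Fin n, ‖a i‖^2 * ‖a k‖^2 else 0 := by
            intro i j
            by_cases hij : i = j <;> simp [hij]
          simp only [h1]
          rw [Finset.sum_congr rfl (fun i _ =>
            Finset.sum_ite_eq univ i (fun _ => ∑ k : Fin n, ‖a i‖^2 * ‖a k‖^2))]
          simp [sq, Finset.sum_mul, Finset.mul_sum]
          exact Finset.sum_comm
        have e2 : ∑ i : Fin n, ∑ j : Fin n, ∑ k : Fin n, ∑ l : Fin n,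
            (if i = l ∧ k = j then ‖a i‖^2 * ‖a k‖^2 else 0)
            = (∑ i, ‖a i‖ ^ 2) ^ 2 := by
          have h1 : ∀ i j : Fin n, ∑ k : Fin n, ∑ l : Fin n,
              (if i = l ∧ k = j then ‖a i‖^2 * ‖a k‖^2 else 0)
              = ‖a i‖^2 * ‖a j‖^2 := by
            intro i j
            have h2 : ∀ k : Fin n, ∑ l : Fin n, (if i = l ∧ k = j then ‖a i‖^2 * ‖a k‖^2 else 0)
                = if k = j then ‖a i‖^2 * ‖a k‖^2 else 0 := by
              intro k
              by_cases hkj : k = j <;> simp [hkj]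
            simp only [h2]
            simp
          simp only [h1]
          simp [sq, Finset.sum_mul, Finset.mul_sum]
          exact Finset.sum_comm
        have esplit : ∑ i : Fin n, ∑ j : Fin n, ∑ k : Fin n, ∑ l : Fin n,
            (4:ℝ)^n * ((if i = j ∧ k = l then ‖a i‖^2 * ‖a k‖^2 else 0)
              + (if i = l ∧ k = j then ‖a i‖^2 * ‖a k‖^2 else 0))
            = (4:ℝ)^n * ((∑ i : Fin n, ∑ j : Fin n, ∑ k : Fin n, ∑ l : Fin n,
                (if i = j ∧ k = l then ‖a i‖^2 * ‖a k‖^2 else 0))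
              + (∑ i : Fin n, ∑ j : Fin n, ∑ k : Fin n, ∑ l : Fin n,
                (if i = l ∧ k = j then ‖a i‖^2 * ‖a k‖^2 else 0))) := by
          simp only [mul_add, Finset.sum_add_distrib, ← Finset.mul_sum]
        rw [esplit, e1, e2]
        ring

end LGTaux

namespace LGTaux

lemma khintchine {n : ℕ} (a : Fin n → ℂ) :
    (4:ℝ)^n * Real.sqrt (∑ i, ‖a i‖ ^ 2)
      ≤ Real.sqrt 2 * ∑ ε : Fin n → Fin 4, ‖∑ i, a i * sgn (ε i)‖ := by
  classical
  set Z : (Fin n → Fin 4) → ℂ := fun ε => ∑ i, a i * sgn (ε i) with hZ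
  set t1 : ℝ := ∑ ε : Fin n → Fin 4, ‖Z ε‖ with ht1
  set A2 : ℝ := ∑ i, ‖a i‖ ^ 2 with hA2
  have hA2nn : 0 ≤ A2 := Finset.sum_nonneg (fun i _ => by positivity)
  have ht1nn : 0 ≤ t1 := Finset.sum_nonneg (fun ε _ => norm_nonneg _)
  by_cases hA0 : A2 = 0
  · rw [hA0, Real.sqrt_zero, mul_zero]
    positivity
  have hA2pos : 0 < A2 := lt_of_le_of_ne hA2nn (Ne.symm hA0)
  set t2 : ℝ := ∑ ε : Fin n → Fin 4, ‖Z ε‖ ^ 2 with ht2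
  set t3 : ℝ := ∑ ε : Fin n → Fin 4, ‖Z ε‖ ^ 3 with ht3
  set t4 : ℝ := ∑ ε : Fin n → Fin 4, (‖Z ε‖ ^ 2) ^ 2 with ht4
  have h2 : t2 = 4 ^ n * A2 := sumZ2 a
  have h4 : t4 ≤ 2 * 4 ^ n * A2 ^ 2 := sumZ4 a
  have cs1 : t2 ^ 2 ≤ t1 * t3 := by
    have := Finset.sum_mul_sq_le_sq_mul_sq Finset.univ
      (fun ε : Fin n → Fin 4 => Real.sqrt ‖Z ε‖)
      (fun ε : Fin n → Fin 4 => Real.sqrt ‖Z ε‖ * ‖Z ε‖)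
    calc t2 ^ 2 = (∑ ε : Fin n → Fin 4,
          Real.sqrt ‖Z ε‖ * (Real.sqrt ‖Z ε‖ * ‖Z ε‖)) ^ 2 := by
          rw [ht2]
          congr 1
          refine Finset.sum_congr rfl (fun ε _ => ?_)
          rw [← mul_assoc, Real.mul_self_sqrt (norm_nonneg _), sq]
      _ ≤ (∑ ε : Fin n → Fin 4, Real.sqrt ‖Z ε‖ ^ 2) *
            (∑ ε : Fin n → Fin 4, (Real.sqrt ‖Z ε‖ * ‖Z ε‖) ^ 2) := this
      _ = t1 * t3 := by
          rw [ht1, ht3]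
          congr 1
          · exact Finset.sum_congr rfl (fun ε _ => Real.sq_sqrt (norm_nonneg _))
          · refine Finset.sum_congr rfl (fun ε _ => ?_)
            rw [mul_pow, Real.sq_sqrt (norm_nonneg _)]
            ring
  have cs2 : t3 ^ 2 ≤ t2 * t4 := by
    have := Finset.sum_mul_sq_le_sq_mul_sq Finset.univ
      (fun ε : Fin n → Fin 4 => ‖Z ε‖)
      (fun ε : Fin n → Fin 4 => ‖Z ε‖ ^ 2)
    calc t3 ^ 2 = (∑ ε : Fin n → Fin 4, ‖Z ε‖ * ‖Z ε‖ ^ 2) ^ 2 := by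
          rw [ht3]
          congr 1
          exact Finset.sum_congr rfl (fun ε _ => by ring)
      _ ≤ (∑ ε : Fin n → Fin 4, ‖Z ε‖ ^ 2) *
            (∑ ε : Fin n → Fin 4, (‖Z ε‖ ^ 2) ^ 2) := this
      _ = t2 * t4 := rfl
  have ht2pos : 0 < t2 := by
    rw [h2]
    positivity
  have ht4nn : 0 ≤ t4 := Finset.sum_nonneg (fun ε _ => by positivity)
  have key : t2 ^ 3 ≤ t1 ^ 2 * t4 := by
    have h3 : (t2 ^ 2) ^ 2 ≤ (t1 * t3) ^ 2 := by
      apply pow_le_pow_left₀ (sq_nonneg t2) cs1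
    have h5 : (t1 * t3) ^ 2 ≤ t1 ^ 2 * (t2 * t4) := by
      have : (t1 * t3) ^ 2 = t1 ^ 2 * t3 ^ 2 := by ring
      rw [this]
      exact mul_le_mul_of_nonneg_left cs2 (sq_nonneg t1)
    have h6 : t2 ^ 3 * t2 ≤ (t1 ^ 2 * t4) * t2 := by
      calc t2 ^ 3 * t2 = (t2 ^ 2) ^ 2 := by ring
        _ ≤ t1 ^ 2 * (t2 * t4) := le_trans h3 h5
        _ = (t1 ^ 2 * t4) * t2 := by ring
    exact le_of_mul_le_mul_right h6 ht2pos
  have main : ((4:ℝ) ^ n) ^ 2 * A2 ≤ 2 * t1 ^ 2 := by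
    have hup : t2 ^ 3 ≤ t1 ^ 2 * (2 * 4 ^ n * A2 ^ 2) :=
      le_trans key (mul_le_mul_of_nonneg_left h4 (sq_nonneg t1))
    rw [h2] at hup
    have hfac : (0:ℝ) < 4 ^ n * A2 ^ 2 := by positivity
    have hmm : ((4:ℝ) ^ n) ^ 2 * A2 * (4 ^ n * A2 ^ 2) ≤ 2 * t1 ^ 2 * (4 ^ n * A2 ^ 2) := by
      calc ((4:ℝ) ^ n) ^ 2 * A2 * (4 ^ n * A2 ^ 2) = (4 ^ n * A2) ^ 3 := by ring
        _ ≤ t1 ^ 2 * (2 * 4 ^ n * A2 ^ 2) := hup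
        _ = 2 * t1 ^ 2 * (4 ^ n * A2 ^ 2) := by ring
    exact le_of_mul_le_mul_right hmm hfac
  have hs := Real.sqrt_le_sqrt main
  rw [Real.sqrt_mul (by positivity) A2, Real.sqrt_mul (by norm_num) (t1 ^ 2),
    Real.sqrt_sq ht1nn, Real.sqrt_sq (by positivity : (0:ℝ) ≤ (4:ℝ)^n)] at hs
  exact hs

end LGTaux

namespace LGTaux

open scoped ComplexInnerProductSpace

variable {H : Type*} [NormedAddCommGroup H] [InnerProductSpace ℂ H]

lemma sum_norm_sq_h {n : ℕ} (y : Fin n → H) :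
    ∑ ε : Fin n → Fin 4, ‖∑ i, sgn (ε i) • y i‖ ^ 2 = 4 ^ n * ∑ i, ‖y i‖ ^ 2 := by
  have hc : ∑ ε : Fin n → Fin 4, ⟪∑ i, sgn (ε i) • y i, ∑ j, sgn (ε j) • y j⟫
      = (4:ℂ) ^ n * ∑ i, ⟪y i, y i⟫ := by
    have hexp : ∀ ε : Fin n → Fin 4, ⟪∑ i, sgn (ε i) • y i, ∑ j, sgn (ε j) • y j⟫
        = ∑ i, ∑ j, (conj (sgn (ε i)) * sgn (ε j)) * ⟪y i, y j⟫ := by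
      intro ε
      rw [sum_inner]
      refine Finset.sum_congr rfl (fun i _ => ?_)
      rw [inner_sum]
      refine Finset.sum_congr rfl (fun j _ => ?_)
      rw [inner_smul_left, inner_smul_right]
      ring
    rw [Finset.sum_congr rfl (fun ε _ => hexp ε)]
    rw [Finset.sum_comm]
    have hswap : ∀ i : Fin n, ∑ ε : Fin n → Fin 4, ∑ j,
        (conj (sgn (ε i)) * sgn (ε j)) * ⟪y i, y j⟫
        = ∑ j, (if i = j then (4:ℂ)^n else 0) * ⟪y i, y j⟫ := by
      intro i
      rw [Finset.sum_comm]
      refine Finset.sum_congr rfl (fun j _ => ?_)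
      rw [← Finset.sum_mul, moment2 i j]
    rw [Finset.sum_congr rfl (fun i _ => hswap i)]
    rw [Finset.mul_sum]
    refine Finset.sum_congr rfl (fun i _ => ?_)
    simp only [ite_mul, zero_mul, Finset.sum_ite_eq, Finset.mem_univ, if_true]
  have hre : ∀ x : H, ⟪x, x⟫ = ((‖x‖ ^ 2 : ℝ) : ℂ) := by
    intro x
    rw [inner_self_eq_norm_sq_to_K]
    norm_cast
  rw [Finset.sum_congr rfl (fun ε _ => hre _), Finset.sum_congr rfl (fun i _ => hre _),
    ← Complex.ofReal_sum, ← Complex.ofReal_sum] at hc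
  have : ((∑ ε : Fin n → Fin 4, ‖∑ i, sgn (ε i) • y i‖ ^ 2 : ℝ) : ℂ)
      = (((4:ℝ) ^ n * ∑ i, ‖y i‖ ^ 2 : ℝ) : ℂ) := by
    rw [hc]
    push_cast
    ring
  exact_mod_cast this

end LGTaux

namespace LGTaux

open scoped ComplexInnerProductSpace

lemma sum_mul_le_sqrt_mul_sqrt {α : Type*} (s : Finset α) (f g : α → ℝ)
    (hf : ∀ i ∈ s, 0 ≤ f i) (hg : ∀ i ∈ s, 0 ≤ g i) :
    ∑ i ∈ s, f i * g i
      ≤ Real.sqrt (∑ i ∈ s, f i ^ 2) * Real.sqrt (∑ i ∈ s, g i ^ 2) := by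
  have h := Finset.sum_mul_sq_le_sq_mul_sq s f g
  have h0 : 0 ≤ ∑ i ∈ s, f i * g i :=
    Finset.sum_nonneg (fun i hi => mul_nonneg (hf i hi) (hg i hi))
  calc ∑ i ∈ s, f i * g i = Real.sqrt ((∑ i ∈ s, f i * g i) ^ 2) :=
        (Real.sqrt_sq h0).symm
    _ ≤ Real.sqrt ((∑ i ∈ s, f i ^ 2) * ∑ i ∈ s, g i ^ 2) := Real.sqrt_le_sqrt h
    _ = _ := Real.sqrt_mul (Finset.sum_nonneg (fun i _ => sq_nonneg _)) _

variable {H : Type*} [NormedAddCommGroup H] [InnerProductSpace ℂ H]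

lemma finite_littleGT {n : ℕ} {ι : Type*} [Fintype ι]
    (v : Fin n → ι → ℂ) (b : ι → H) (M Λ : ℝ) (hM : 0 ≤ M) (hΛ : 0 ≤ Λ)
    (hv : ∀ j, ∑ i, ‖v i j‖ ^ 2 ≤ M ^ 2)
    (hb : ∀ θ : ι → ℂ, (∀ j, ‖θ j‖ ≤ 1) → ‖∑ j, θ j • b j‖ ≤ Λ) :
    ∑ i, ‖∑ j, v i j • b j‖ ^ 2 ≤ 2 * Λ ^ 2 * M ^ 2 := by
  classical
  set y : Fin n → H := fun i => ∑ j, v i j • b j with hy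
  set S : ℝ := ∑ i, ‖y i‖ ^ 2 with hS
  have hSnn : 0 ≤ S := Finset.sum_nonneg (fun i _ => sq_nonneg _)
  set c : Fin n → ι → ℂ := fun i j => ⟪y i, b j⟫ with hc
  set h : (Fin n → Fin 4) → H := fun ε => ∑ i, sgn (ε i) • y i with hh
  -- Step 1: S as a real part
  have step1 : S = (∑ j, ∑ i, v i j * c i j).re := by
    have hinner : ∀ i, ⟪y i, y i⟫ = ∑ j, v i j * c i j := by
      intro i
      calc ⟪y i, y i⟫ = ⟪y i, ∑ j, v i j • b j⟫ := rfl
        _ = ∑ j, v i j * c i j := by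
            rw [inner_sum]
            exact Finset.sum_congr rfl (fun j _ => inner_smul_right _ _ _)
    have : S = (∑ i, ∑ j, v i j * c i j).re := by
      rw [hS, Complex.re_sum]
      refine Finset.sum_congr rfl (fun i _ => ?_)
      rw [← hinner i]
      have := inner_self_eq_norm_sq_to_K (𝕜 := ℂ) (y i)
      rw [this]
      norm_cast
    rw [this, Finset.sum_comm]
  -- Step 2: Cauchy-Schwarz in i, for each j
  have step2 : S ≤ M * ∑ j, Real.sqrt (∑ i, ‖c i j‖ ^ 2) := by
    calc S = (∑ j, ∑ i, v i j * c i j).re := step1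
      _ ≤ ‖∑ j, ∑ i, v i j * c i j‖ := Complex.re_le_norm _
      _ ≤ ∑ j, ‖∑ i, v i j * c i j‖ := norm_sum_le _ _
      _ ≤ ∑ j, Real.sqrt (∑ i, ‖v i j‖ ^ 2) * Real.sqrt (∑ i, ‖c i j‖ ^ 2) := by
          refine Finset.sum_le_sum (fun j _ => ?_)
          calc ‖∑ i, v i j * c i j‖ ≤ ∑ i, ‖v i j * c i j‖ := norm_sum_le _ _
            _ = ∑ i, ‖v i j‖ * ‖c i j‖ := by
                exact Finset.sum_congr rfl (fun i _ => norm_mul _ _)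
            _ ≤ _ := sum_mul_le_sqrt_mul_sqrt _ _ _
                (fun i _ => norm_nonneg _) (fun i _ => norm_nonneg _)
      _ ≤ ∑ j, M * Real.sqrt (∑ i, ‖c i j‖ ^ 2) := by
          refine Finset.sum_le_sum (fun j _ => ?_)
          have h1 : Real.sqrt (∑ i, ‖v i j‖ ^ 2) ≤ M := by
            calc Real.sqrt (∑ i, ‖v i j‖ ^ 2) ≤ Real.sqrt (M ^ 2) :=
                  Real.sqrt_le_sqrt (hv j)
              _ = M := Real.sqrt_sq hM
          exact mul_le_mul_of_nonneg_right h1 (Real.sqrt_nonneg _)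
      _ = M * ∑ j, Real.sqrt (∑ i, ‖c i j‖ ^ 2) := by rw [Finset.mul_sum]
  -- Step 3: Khintchine per column
  have step3 : ∀ j, (4:ℝ)^n * Real.sqrt (∑ i, ‖c i j‖ ^ 2)
      ≤ Real.sqrt 2 * ∑ ε : Fin n → Fin 4, ‖⟪h ε, b j⟫‖ := by
    intro j
    have hk := khintchine (fun i => conj (c i j))
    have e1 : ∑ i, ‖conj (c i j)‖ ^ 2 = ∑ i, ‖c i j‖ ^ 2 :=
      Finset.sum_congr rfl (fun i _ => by rw [RCLike.norm_conj])
    have e2 : ∀ ε : Fin n → Fin 4, ‖∑ i, conj (c i j) * sgn (ε i)‖ = ‖⟪h ε, b j⟫‖ := by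
      intro ε
      have hinner : ⟪h ε, b j⟫ = ∑ i, conj (sgn (ε i)) * c i j := by
        rw [hh]
        simp only []
        rw [sum_inner]
        exact Finset.sum_congr rfl (fun i _ => inner_smul_left _ _ _)
      have hconj : ∑ i, conj (c i j) * sgn (ε i) = conj ⟪h ε, b j⟫ := by
        rw [hinner, map_sum]
        refine Finset.sum_congr rfl (fun i _ => ?_)
        rw [map_mul, Complex.conj_conj]
        ring
      rw [hconj, RCLike.norm_conj]
    rw [e1] at hk
    calc (4:ℝ)^n * Real.sqrt (∑ i, ‖c i j‖ ^ 2)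
        ≤ Real.sqrt 2 * ∑ ε : Fin n → Fin 4, ‖∑ i, conj (c i j) * sgn (ε i)‖ := hk
      _ = Real.sqrt 2 * ∑ ε : Fin n → Fin 4, ‖⟪h ε, b j⟫‖ := by
          rw [Finset.sum_congr rfl (fun ε _ => e2 ε)]
  -- Step 5: duality with the sup bound
  have step5 : ∀ ε : Fin n → Fin 4, ∑ j, ‖⟪h ε, b j⟫‖ ≤ Λ * ‖h ε‖ := by
    intro ε
    set θ : ι → ℂ := fun j =>
      if ⟪h ε, b j⟫ = 0 then 1 else (‖⟪h ε, b j⟫‖ : ℂ) / ⟪h ε, b j⟫ with hθ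
    have hθ1 : ∀ j, ‖θ j‖ ≤ 1 := by
      intro j
      rw [hθ]
      simp only []
      split
      · simp
      · rename_i hz
        rw [norm_div, Complex.norm_real, Real.norm_eq_abs, abs_norm]
        exact le_of_eq (div_self (norm_ne_zero_iff.mpr hz))
    have hmul : ∀ j, θ j * ⟪h ε, b j⟫ = ((‖⟪h ε, b j⟫‖ : ℝ) : ℂ) := by
      intro j
      rw [hθ]
      simp only []
      split
      · rename_i hz
        rw [hz]
        simp
      · rename_i hz
        field_simp
    have hsum : ((∑ j, ‖⟪h ε, b j⟫‖ : ℝ) : ℂ) = ⟪h ε, ∑ j, θ j • b j⟫ := by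
      rw [Complex.ofReal_sum, inner_sum]
      refine Finset.sum_congr rfl (fun j _ => ?_)
      rw [inner_smul_right, hmul j]
    calc ∑ j, ‖⟪h ε, b j⟫‖ = (⟪h ε, ∑ j, θ j • b j⟫).re := by
          rw [← hsum, Complex.ofReal_re]
      _ ≤ ‖⟪h ε, ∑ j, θ j • b j⟫‖ := Complex.re_le_norm _
      _ ≤ ‖h ε‖ * ‖∑ j, θ j • b j‖ := norm_inner_le_norm _ _
      _ ≤ ‖h ε‖ * Λ := mul_le_mul_of_nonneg_left (hb θ hθ1) (norm_nonneg _)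
      _ = Λ * ‖h ε‖ := mul_comm _ _
  -- Step 6: comparison of first and second moments of ‖h ε‖
  have step6 : ∑ ε : Fin n → Fin 4, ‖h ε‖ ≤ (4:ℝ)^n * Real.sqrt S := by
    have hcs := Finset.sum_mul_sq_le_sq_mul_sq Finset.univ
      (fun _ : Fin n → Fin 4 => (1:ℝ)) (fun ε => ‖h ε‖)
    have hS4 : ∑ ε : Fin n → Fin 4, ‖h ε‖ ^ 2 = 4^n * S := sum_norm_sq_h y
    have hcard : ∑ _ε : Fin n → Fin 4, (1:ℝ)^2 = (4:ℝ)^n := by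
      simp [Finset.card_univ, Fintype.card_fun]
    have hnn : 0 ≤ ∑ ε : Fin n → Fin 4, ‖h ε‖ :=
      Finset.sum_nonneg (fun ε _ => norm_nonneg _)
    have h1 : (∑ ε : Fin n → Fin 4, ‖h ε‖) ^ 2 ≤ (4:ℝ)^n * ((4:ℝ)^n * S) := by
      calc (∑ ε : Fin n → Fin 4, ‖h ε‖) ^ 2
          = (∑ ε : Fin n → Fin 4, 1 * ‖h ε‖) ^ 2 := by simp
        _ ≤ (∑ _ε : Fin n → Fin 4, (1:ℝ)^2) * ∑ ε : Fin n → Fin 4, ‖h ε‖ ^ 2 := hcs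
        _ = (4:ℝ)^n * ((4:ℝ)^n * S) := by rw [hcard, hS4]
    calc ∑ ε : Fin n → Fin 4, ‖h ε‖
        = Real.sqrt ((∑ ε : Fin n → Fin 4, ‖h ε‖) ^ 2) := (Real.sqrt_sq hnn).symm
      _ ≤ Real.sqrt ((4:ℝ)^n * ((4:ℝ)^n * S)) := Real.sqrt_le_sqrt h1
      _ = (4:ℝ)^n * Real.sqrt S := by
          rw [show (4:ℝ)^n * ((4:ℝ)^n * S) = ((4:ℝ)^n)^2 * S by ring,
            Real.sqrt_mul (sq_nonneg _), Real.sqrt_sq (by positivity)]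
  -- Combine everything
  have hcol : (4:ℝ)^n * ∑ j, Real.sqrt (∑ i, ‖c i j‖ ^ 2)
      ≤ Real.sqrt 2 * Λ * ((4:ℝ)^n * Real.sqrt S) := by
    calc (4:ℝ)^n * ∑ j, Real.sqrt (∑ i, ‖c i j‖ ^ 2)
        = ∑ j, (4:ℝ)^n * Real.sqrt (∑ i, ‖c i j‖ ^ 2) := Finset.mul_sum _ _ _
      _ ≤ ∑ j, Real.sqrt 2 * ∑ ε : Fin n → Fin 4, ‖⟪h ε, b j⟫‖ :=
          Finset.sum_le_sum (fun j _ => step3 j)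
      _ = Real.sqrt 2 * ∑ j, ∑ ε : Fin n → Fin 4, ‖⟪h ε, b j⟫‖ :=
          (Finset.mul_sum _ _ _).symm
      _ = Real.sqrt 2 * ∑ ε : Fin n → Fin 4, ∑ j, ‖⟪h ε, b j⟫‖ := by
          rw [Finset.sum_comm]
      _ ≤ Real.sqrt 2 * ∑ ε : Fin n → Fin 4, Λ * ‖h ε‖ := by
          refine mul_le_mul_of_nonneg_left ?_ (Real.sqrt_nonneg 2)
          exact Finset.sum_le_sum (fun ε _ => step5 ε)
      _ = Real.sqrt 2 * Λ * ∑ ε : Fin n → Fin 4, ‖h ε‖ := by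
          rw [← Finset.mul_sum]
          ring
      _ ≤ Real.sqrt 2 * Λ * ((4:ℝ)^n * Real.sqrt S) := by
          refine mul_le_mul_of_nonneg_left step6 ?_
          positivity
  have hcol' : ∑ j, Real.sqrt (∑ i, ‖c i j‖ ^ 2) ≤ Real.sqrt 2 * Λ * Real.sqrt S := by
    have h4pos : (0:ℝ) < (4:ℝ)^n := by positivity
    have := hcol
    rw [show Real.sqrt 2 * Λ * ((4:ℝ)^n * Real.sqrt S)
        = (4:ℝ)^n * (Real.sqrt 2 * Λ * Real.sqrt S) by ring] at this
    exact le_of_mul_le_mul_left this h4pos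
  have main : S ≤ Real.sqrt 2 * Λ * M * Real.sqrt S := by
    calc S ≤ M * ∑ j, Real.sqrt (∑ i, ‖c i j‖ ^ 2) := step2
      _ ≤ M * (Real.sqrt 2 * Λ * Real.sqrt S) := mul_le_mul_of_nonneg_left hcol' hM
      _ = Real.sqrt 2 * Λ * M * Real.sqrt S := by ring
  -- Conclude
  by_cases hS0 : S = 0
  · rw [hS0]
    positivity
  · have hSpos : 0 < S := lt_of_le_of_ne hSnn (Ne.symm hS0)
    have hsqpos : 0 < Real.sqrt S := Real.sqrt_pos.mpr hSpos
    have hle : Real.sqrt S ≤ Real.sqrt 2 * Λ * M := by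
      have : Real.sqrt S * Real.sqrt S ≤ (Real.sqrt 2 * Λ * M) * Real.sqrt S := by
        rw [Real.mul_self_sqrt hSnn]
        exact main
      exact le_of_mul_le_mul_right this hsqpos
    calc S = Real.sqrt S ^ 2 := (Real.sq_sqrt hSnn).symm
      _ ≤ (Real.sqrt 2 * Λ * M) ^ 2 :=
          pow_le_pow_left₀ (Real.sqrt_nonneg _) hle 2
      _ = Real.sqrt 2 ^ 2 * Λ ^ 2 * M ^ 2 := by ring
      _ = 2 * Λ ^ 2 * M ^ 2 := by rw [Real.sq_sqrt (by norm_num : (0:ℝ) ≤ 2)]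

end LGTaux
section Main

open LGTaux

variable {K : Type*} [TopologicalSpace K] [CompactSpace K] [T2Space K]
variable {H : Type*} [NormedAddCommGroup H] [InnerProductSpace ℂ H] [CompleteSpace H]

theorem main_thm (A : C(K, ℂ) →L[ℂ] H) (n : ℕ) (x : Fin n → C(K, ℂ)) (M : ℝ) (hM : 0 ≤ M)
    (hweak : ∀ x' : C(K, ℂ) →L[ℂ] ℂ, ‖x'‖ ≤ 1 → ∑ i, ‖x' (x i)‖ ^ 2 ≤ M ^ 2) :
    ∑ i, ‖A (x i)‖ ^ 2 ≤ (Real.sqrt 2 * ‖A‖) ^ 2 * M ^ 2 := by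
  classical
  have hC2 : (Real.sqrt 2 * ‖A‖) ^ 2 * M ^ 2 = 2 * ‖A‖ ^ 2 * M ^ 2 := by
    rw [mul_pow, Real.sq_sqrt (by norm_num : (0:ℝ) ≤ 2)]
  rw [hC2]
  -- pointwise bound from the weak hypothesis
  have hpt : ∀ t : K, ∑ i, ‖x i t‖ ^ 2 ≤ M ^ 2 := by
    intro t
    have hnrm : ‖ContinuousMap.evalCLM (M := ℂ) ℂ t‖ ≤ 1 := by
      refine ContinuousLinearMap.opNorm_le_bound _ zero_le_one (fun g => ?_)
      rw [one_mul]
      exact ContinuousMap.norm_coe_le_norm g t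
    have := hweak (ContinuousMap.evalCLM (M := ℂ) ℂ t) hnrm
    simpa [ContinuousMap.evalCLM] using this
  -- ε/3 argument
  refine le_of_forall_pos_le_add ?_
  intro η hη
  set D : ℝ := ‖A‖ ^ 2 * ∑ i, (2 * ‖x i‖ + 3) with hD
  have hDnn : 0 ≤ D := by
    refine mul_nonneg (sq_nonneg _) (Finset.sum_nonneg (fun i _ => ?_))
    positivity
  set δ : ℝ := min 1 (η / (D + 1)) with hδ
  have hδpos : 0 < δ := lt_min one_pos (div_pos hη (by linarith))
  have hδ1 : δ ≤ 1 := min_le_left _ _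
  have hδD : δ * D ≤ η := by
    have h1 : δ ≤ η / (D + 1) := min_le_right _ _
    calc δ * D ≤ (η / (D + 1)) * D :=
          mul_le_mul_of_nonneg_right h1 hDnn
      _ ≤ η := by
          rw [div_mul_eq_mul_div, div_le_iff₀ (by linarith)]
          nlinarith
  -- the open cover and partition of unity
  set U : K → Set K := fun t => ⋂ i, (⇑(x i)) ⁻¹' Metric.ball (x i t) δ with hU
  have hUopen : ∀ t, IsOpen (U t) :=
    fun t => isOpen_iInter_of_finite
      (fun i => (Metric.isOpen_ball).preimage (x i).continuous)
  have hUcov : (Set.univ : Set K) ⊆ ⋃ t, U t := by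
    intro s _
    exact Set.mem_iUnion.mpr ⟨s, Set.mem_iInter.mpr
      (fun i => Set.mem_preimage.mpr (Metric.mem_ball_self hδpos))⟩
  obtain ⟨T, hT⟩ := isCompact_univ.elim_finite_subcover U hUopen hUcov
  have hcov2 : (Set.univ : Set K) ⊆ ⋃ j : {t // t ∈ T}, U ↑j := by
    intro s hs
    obtain ⟨t, ht, hst⟩ := Set.mem_iUnion₂.mp (hT hs)
    exact Set.mem_iUnion.mpr ⟨⟨t, ht⟩, hst⟩
  obtain ⟨f, hf⟩ := PartitionOfUnity.exists_isSubordinate isClosed_univ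
    (fun j : {t // t ∈ T} => U ↑j) (fun j => hUopen _) hcov2
  have hsum1 : ∀ s : K, ∑ j : {t // t ∈ T}, f j s = 1 := by
    intro s
    rw [← finsum_eq_sum_of_fintype]
    exact f.sum_eq_one (Set.mem_univ s)
  have hsupp : ∀ (j : {t // t ∈ T}) (s : K), f j s ≠ 0 → s ∈ U ↑j := by
    intro j s hjs
    exact hf j (subset_tsupport _ hjs)
  -- the approximating functions
  set p : {t // t ∈ T} → C(K, ℂ) := fun j =>
    ⟨fun s => ((f j s : ℝ) : ℂ), Complex.continuous_ofReal.comp (f j).continuous⟩ with hp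
  set v : Fin n → {t // t ∈ T} → ℂ := fun i j => x i ↑j with hv
  set b : {t // t ∈ T} → H := fun j => A (p j) with hb
  have hcol : ∀ j, ∑ i, ‖v i j‖ ^ 2 ≤ M ^ 2 := fun j => hpt ↑j
  have hbound : ∀ θ : {t // t ∈ T} → ℂ, (∀ j, ‖θ j‖ ≤ 1) → ‖∑ j, θ j • b j‖ ≤ ‖A‖ := by
    intro θ hθ
    have hAconv : ∑ j, θ j • b j = A (∑ j, θ j • p j) := by
      rw [map_sum]
      exact Finset.sum_congr rfl (fun j _ => (A.map_smul _ _).symm)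
    rw [hAconv]
    have hnorm1 : ‖∑ j, θ j • p j‖ ≤ 1 := by
      rw [ContinuousMap.norm_le _ zero_le_one]
      intro s
      calc ‖(∑ j, θ j • p j) s‖ = ‖∑ j, θ j * ((f j s : ℝ) : ℂ)‖ := by
            simp only [ContinuousMap.sum_apply, ContinuousMap.smul_apply, smul_eq_mul, hp,
              ContinuousMap.coe_mk]
        _ ≤ ∑ j, ‖θ j * ((f j s : ℝ) : ℂ)‖ := norm_sum_le _ _
        _ ≤ ∑ j, f j s := by
            refine Finset.sum_le_sum (fun j _ => ?_)
            rw [norm_mul, Complex.norm_real, Real.norm_eq_abs,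
              abs_of_nonneg (f.nonneg j s)]
            exact mul_le_of_le_one_left (f.nonneg j s) (hθ j)
        _ = 1 := hsum1 s
    calc ‖A (∑ j, θ j • p j)‖ ≤ ‖A‖ * ‖∑ j, θ j • p j‖ := A.le_opNorm _
      _ ≤ ‖A‖ * 1 := mul_le_mul_of_nonneg_left hnorm1 (norm_nonneg A)
      _ = ‖A‖ := mul_one _
  have hcore := finite_littleGT v b M ‖A‖ hM (norm_nonneg A) hcol hbound
  -- identify the approximation
  set xd : Fin n → C(K, ℂ) := fun i => ∑ j, v i j • p j with hxd
  have hAxd : ∀ i, ∑ j, v i j • b j = A (xd i) := by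
    intro i
    rw [hxd]
    simp only []
    rw [map_sum]
    exact Finset.sum_congr rfl (fun j _ => (A.map_smul _ _).symm)
  have herr : ∀ i, ‖x i - xd i‖ ≤ δ := by
    intro i
    rw [ContinuousMap.norm_le _ (le_of_lt hδpos)]
    intro s
    have hval : (x i - xd i) s = ∑ j, ((f j s : ℝ) : ℂ) * (x i s - x i ↑j) := by
      have h1 : (x i - xd i) s = x i s - ∑ j, v i j * ((f j s : ℝ) : ℂ) := by
        rw [ContinuousMap.sub_apply]
        congr 1
        rw [hxd]
        simp only []
        rw [ContinuousMap.sum_apply]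
        exact Finset.sum_congr rfl (fun j _ => rfl)
      rw [h1]
      have h2 : (∑ j, ((f j s : ℝ) : ℂ)) = 1 := by
        rw [← Complex.ofReal_sum, hsum1 s, Complex.ofReal_one]
      calc x i s - ∑ j, v i j * ((f j s : ℝ) : ℂ)
          = (∑ j, ((f j s : ℝ) : ℂ)) * x i s - ∑ j, v i j * ((f j s : ℝ) : ℂ) := by
            rw [h2, one_mul]
        _ = ∑ j, (((f j s : ℝ) : ℂ) * x i s - v i j * ((f j s : ℝ) : ℂ)) := by
            rw [Finset.sum_sub_distrib, Finset.sum_mul]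
        _ = ∑ j, ((f j s : ℝ) : ℂ) * (x i s - x i ↑j) := by
            refine Finset.sum_congr rfl (fun j _ => ?_)
            rw [hv]
            ring
    rw [hval]
    calc ‖∑ j, ((f j s : ℝ) : ℂ) * (x i s - x i ↑j)‖
        ≤ ∑ j, ‖((f j s : ℝ) : ℂ) * (x i s - x i ↑j)‖ := norm_sum_le _ _
      _ ≤ ∑ j, f j s * δ := by
          refine Finset.sum_le_sum (fun j _ => ?_)
          rw [norm_mul, Complex.norm_real, Real.norm_eq_abs,
            abs_of_nonneg (f.nonneg j s)]
          by_cases hjs : f j s = 0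
          · rw [hjs]
            simp
          · refine mul_le_mul_of_nonneg_left ?_ (f.nonneg j s)
            have hsU : s ∈ U ↑j := hsupp j s hjs
            have := Set.mem_iInter.mp hsU i
            rw [Set.mem_preimage, Metric.mem_ball] at this
            rw [← dist_eq_norm]
            exact le_of_lt this
      _ = δ := by
          rw [← Finset.sum_mul, hsum1 s, one_mul]
  -- final arithmetic
  have hfin : ∀ i, ‖A (x i)‖ ^ 2 ≤ ‖A (xd i)‖ ^ 2 + δ * (‖A‖ ^ 2 * (2 * ‖x i‖ + 3)) := by
    intro i
    have h1 : ‖A (x i)‖ ≤ ‖A (xd i)‖ + ‖A‖ * δ := by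
      calc ‖A (x i)‖ ≤ ‖A (xd i)‖ + ‖A (x i) - A (xd i)‖ := by
            have := norm_add_le (A (xd i)) (A (x i) - A (xd i))
            simpa using this
        _ ≤ ‖A (xd i)‖ + ‖A‖ * δ := by
            have : ‖A (x i) - A (xd i)‖ ≤ ‖A‖ * δ := by
              rw [← map_sub]
              calc ‖A (x i - xd i)‖ ≤ ‖A‖ * ‖x i - xd i‖ := A.le_opNorm _
                _ ≤ ‖A‖ * δ := mul_le_mul_of_nonneg_left (herr i) (norm_nonneg A)
            linarith
    have h2 : ‖A (xd i)‖ ≤ ‖A‖ * (‖x i‖ + δ) := by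
      calc ‖A (xd i)‖ ≤ ‖A‖ * ‖xd i‖ := A.le_opNorm _
        _ ≤ ‖A‖ * (‖x i‖ + δ) := by
            refine mul_le_mul_of_nonneg_left ?_ (norm_nonneg A)
            calc ‖xd i‖ = ‖x i - (x i - xd i)‖ := by congr 1; abel
              _ ≤ ‖x i‖ + ‖x i - xd i‖ := norm_sub_le _ _
              _ ≤ ‖x i‖ + δ := by linarith [herr i]
    have hxinn : 0 ≤ ‖x i‖ := norm_nonneg _
    have hAnn : 0 ≤ ‖A‖ := norm_nonneg _
    have hAxnn : 0 ≤ ‖A (x i)‖ := norm_nonneg _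
    have hAxdnn : 0 ≤ ‖A (xd i)‖ := norm_nonneg _
    have h1' := mul_self_le_mul_self hAxnn h1
    have h2' := mul_le_mul_of_nonneg_right h2 (mul_nonneg hAnn hδpos.le)
    have h3' := mul_le_mul_of_nonneg_left
      (mul_le_mul_of_nonneg_left hδ1 hδpos.le) (sq_nonneg ‖A‖)
    nlinarith [h1', h2', h3']
  calc ∑ i, ‖A (x i)‖ ^ 2
      ≤ ∑ i, (‖A (xd i)‖ ^ 2 + δ * (‖A‖ ^ 2 * (2 * ‖x i‖ + 3))) :=
        Finset.sum_le_sum (fun i _ => hfin i)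
    _ = (∑ i, ‖A (xd i)‖ ^ 2) + δ * D := by
        rw [Finset.sum_add_distrib]
        simp only [← Finset.mul_sum]
        rw [hD]
    _ ≤ 2 * ‖A‖ ^ 2 * M ^ 2 + η := by
        have hc2 : ∑ i, ‖A (xd i)‖ ^ 2 ≤ 2 * ‖A‖ ^ 2 * M ^ 2 := by
          have := hcore
          rw [show (∑ i, ‖∑ j, v i j • b j‖ ^ 2) = ∑ i, ‖A (xd i)‖ ^ 2 from
            Finset.sum_congr rfl (fun i _ => by rw [hAxd i])] at this
          exact this
        linarith [hδD]

end Main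


/-- every bounded operator from `C(K)` (`K` compact Hausdorff) to a Hilbert
space is absolutely 2-summing. -/
theorem continuousMap_to_hilbert_abs2Summing {K : Type*} [TopologicalSpace K]
    [CompactSpace K] [T2Space K] {H : Type*} [NormedAddCommGroup H]
    [InnerProductSpace ℂ H] [CompleteSpace H] (A : C(K, ℂ) →L[ℂ] H) :
    IsAbs2Summing A :=
  ⟨Real.sqrt 2 * ‖A‖, by positivity, fun n x M hM hw => main_thm A n x M hM hw⟩
end

section
/- Let X, Y be Banach spaces and T : X → Y, S : Y → X bounded linear operators such that both T ∘ S and S ∘ T are compact. Then the nonzero eigenvalues of T ∘ S and of S ∘ T coincide, counted with algebraic multiplicities. -/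
open scoped BigOperators
open MeasureTheory

lemma finrank_eq_of_inj_inj {M N : Type*} [AddCommGroup M] [Module ℂ M]
    [AddCommGroup N] [Module ℂ N] (f : M →ₗ[ℂ] N) (g : N →ₗ[ℂ] M)
    (hf : Function.Injective f) (hg : Function.Injective g) :
    Module.finrank ℂ M = Module.finrank ℂ N := by
  by_cases h : FiniteDimensional ℂ M
  · have hN : FiniteDimensional ℂ N := FiniteDimensional.of_injective g hg
    exact le_antisymm (LinearMap.finrank_le_finrank_of_injective hf)
      (LinearMap.finrank_le_finrank_of_injective hg)
  · have hN : ¬ FiniteDimensional ℂ N := fun hN => h (FiniteDimensional.of_injective f hf)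
    rw [Module.finrank_of_infinite_dimensional h,
      Module.finrank_of_infinite_dimensional hN]

section
variable {X Y : Type*} [NormedAddCommGroup X] [NormedSpace ℂ X]
    [NormedAddCommGroup Y] [NormedSpace ℂ Y]

lemma comp_pow_comm (T : X →L[ℂ] Y) (S : Y →L[ℂ] X) (lam : ℂ) (n : ℕ) :
    (S : Y →ₗ[ℂ] X) ∘ₗ (((lam • ContinuousLinearMap.id ℂ Y - T.comp S) ^ n : Y →L[ℂ] Y) : Y →ₗ[ℂ] Y)
      = ((((lam • ContinuousLinearMap.id ℂ X - S.comp T) ^ n : X →L[ℂ] X)) : X →ₗ[ℂ] X) ∘ₗ (S : Y →ₗ[ℂ] X) := by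
  induction n with
  | zero => ext y; simp
  | succ n ih =>
    ext y
    have base : ∀ z : Y, S ((lam • ContinuousLinearMap.id ℂ Y - T.comp S) z)
        = (lam • ContinuousLinearMap.id ℂ X - S.comp T) (S z) := by
      intro z
      simp [ContinuousLinearMap.smul_apply, _root_.map_smul]
    have ihy := LinearMap.congr_fun ih y
    simp only [pow_succ', LinearMap.comp_apply, ContinuousLinearMap.coe_coe,
      ContinuousLinearMap.mul_apply] at ihy ⊢
    rw [base, ihy]
end

section
variable {X Y : Type*} [NormedAddCommGroup X] [NormedSpace ℂ X]
    [NormedAddCommGroup Y] [NormedSpace ℂ Y]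

lemma exists_inj (T : X →L[ℂ] Y) (S : Y →L[ℂ] X) {lam : ℂ} (hlam : lam ≠ 0) :
    ∃ f : ↥(⨆ n : ℕ, LinearMap.ker
        ((((lam • ContinuousLinearMap.id ℂ Y - T.comp S) ^ n : Y →L[ℂ] Y)) : Y →ₗ[ℂ] Y)) →ₗ[ℂ]
      ↥(⨆ n : ℕ, LinearMap.ker
        ((((lam • ContinuousLinearMap.id ℂ X - S.comp T) ^ n : X →L[ℂ] X)) : X →ₗ[ℂ] X)),
      Function.Injective f := by
  set A := lam • ContinuousLinearMap.id ℂ Y - T.comp S with hA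
  set B := lam • ContinuousLinearMap.id ℂ X - S.comp T with hB
  set E₁ := ⨆ n : ℕ, LinearMap.ker (((A ^ n : Y →L[ℂ] Y)) : Y →ₗ[ℂ] Y) with hE₁
  set E₂ := ⨆ n : ℕ, LinearMap.ker (((B ^ n : X →L[ℂ] X)) : X →ₗ[ℂ] X) with hE₂
  have hmap : ∀ y ∈ E₁, (S : Y →ₗ[ℂ] X) y ∈ E₂ := by
    intro y hy
    have : E₁ ≤ E₂.comap (S : Y →ₗ[ℂ] X) := by
      refine iSup_le fun n => ?_
      intro z hz
      simp only [LinearMap.mem_ker] at hz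
      have := LinearMap.congr_fun (comp_pow_comm T S lam n) z
      simp only [LinearMap.comp_apply, ContinuousLinearMap.coe_coe, hz, map_zero] at this
      refine Submodule.mem_comap.2 (Submodule.mem_iSup_of_mem n ?_)
      exact LinearMap.mem_ker.2 ((LinearMap.congr_fun (comp_pow_comm T S lam n) z).symm.trans ((congrArg S hz).trans (map_zero _)))
    exact this hy
  refine ⟨(S : Y →ₗ[ℂ] X).restrict hmap, ?_⟩
  rw [← LinearMap.ker_eq_bot, LinearMap.ker_eq_bot']
  rintro ⟨y, hy⟩ h0
  have hSy : S y = 0 := by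
    have := congrArg Subtype.val h0
    simpa [LinearMap.restrict_apply] using this
  -- locate y in some kernel
  have hdir : Directed (· ≤ ·) fun n : ℕ =>
      LinearMap.ker (((A ^ n : Y →L[ℂ] Y)) : Y →ₗ[ℂ] Y) := by
    refine (Monotone.directed_le ?_)
    intro m n hmn z hz
    obtain ⟨k, rfl⟩ := Nat.exists_eq_add_of_le hmn
    simp only [LinearMap.mem_ker, ContinuousLinearMap.coe_coe] at hz ⊢
    rw [add_comm, pow_add]
    simp [ContinuousLinearMap.mul_apply, hz]
  obtain ⟨n, hn⟩ := (Submodule.mem_iSup_of_directed _ hdir).1 hy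
  simp only [LinearMap.mem_ker, ContinuousLinearMap.coe_coe] at hn
  have key : ∀ k : ℕ, (A ^ k) y = lam ^ k • y := by
    intro k
    induction k with
    | zero => simp
    | succ k ih =>
      rw [pow_succ', ContinuousLinearMap.mul_apply, ih, _root_.map_smul]
      have : A y = lam • y := by
        simp [hA, ContinuousLinearMap.sub_apply, ContinuousLinearMap.comp_apply, hSy]
      rw [this, smul_smul, ← pow_succ]
  have : lam ^ n • y = 0 := by rw [← key n, hn]
  have hy0 : y = 0 := by
    rcases smul_eq_zero.1 this with h | h
    · exact absurd h (pow_ne_zero n hlam)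
    · exact h
  exact Subtype.ext hy0

end


/-- if `T ∘ S` and `S ∘ T` are compact, their nonzero eigenvalues coincide,
counted with algebraic multiplicities. -/
theorem eigenvalues_comp_comm {X Y : Type*}
    [NormedAddCommGroup X] [NormedSpace ℂ X] [CompleteSpace X]
    [NormedAddCommGroup Y] [NormedSpace ℂ Y] [CompleteSpace Y]
    (T : X →L[ℂ] Y) (S : Y →L[ℂ] X)
    (hTS : IsCompactOperator ⇑(T.comp S)) (hST : IsCompactOperator ⇑(S.comp T)) :
    ∀ lam : ℂ, lam ≠ 0 → algMult (T.comp S) lam = algMult (S.comp T) lam := by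
  intro lam hlam
  obtain ⟨f, hf⟩ := exists_inj T S hlam
  obtain ⟨g, hg⟩ := exists_inj S T hlam
  exact finrank_eq_of_inj_inj f g hf hg
end

section
/- There exists a continuous function f on the unit circle 𝕋 whose sequence of Fourier coefficients lies in ℓ_2 but not in ℓ_p for any p < 2. -/
open scoped BigOperators
open MeasureTheory

instance : Fact (0 < 2 * Real.pi) := ⟨Real.two_pi_pos⟩


noncomputable section
namespace Carleman
open Complex MeasureTheory
abbrev 𝕋 := AddCircle (2 * Real.pi)

lemma integrable_aux (g : C(𝕋, ℂ)) (n : ℤ) :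
    Integrable (fun t => fourier (-n) t • g t) AddCircle.haarAddCircle :=
  Continuous.integrable_of_hasCompactSupport
    (((map_continuous (fourier (-n))).smul (map_continuous g)))
    (HasCompactSupport.of_compactSpace _)

/-- The Fourier coefficient functional as a continuous linear map on `C(𝕋, ℂ)`. -/
def fc (n : ℤ) : C(𝕋, ℂ) →L[ℂ] ℂ :=
  LinearMap.mkContinuous
    { toFun := fun g => fourierCoeff (⇑g) n
      map_add' := by
        intro f g
        show fourierCoeff (⇑(f + g)) n = fourierCoeff (⇑f) n + fourierCoeff (⇑g) n
        simp only [fourierCoeff, ContinuousMap.coe_add, Pi.add_apply, smul_add]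
        exact integral_add (integrable_aux f n) (integrable_aux g n)
      map_smul' := by
        intro c g
        show fourierCoeff (⇑(c • g)) n = c • fourierCoeff (⇑g) n
        rw [ContinuousMap.coe_smul]
        exact fourierCoeff.const_smul (⇑g) c n }
    1
    (by
      intro g
      show ‖fourierCoeff (⇑g) n‖ ≤ 1 * ‖g‖
      rw [one_mul, fourierCoeff]
      calc ‖∫ t : 𝕋, fourier (-n) t • g t ∂AddCircle.haarAddCircle‖
          ≤ ‖g‖ * (AddCircle.haarAddCircle Set.univ).toReal := by
            apply norm_integral_le_of_norm_le_const
            filter_upwards with t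
            rw [norm_smul]
            calc ‖(fourier (-n)) t‖ * ‖g t‖ ≤ 1 * ‖g‖ := by
                  apply mul_le_mul _ (g.norm_coe_le_norm t) (norm_nonneg _) zero_le_one
                  calc ‖(fourier (-n)) t‖ ≤ ‖(fourier (-n) : C(𝕋, ℂ))‖ :=
                        ContinuousMap.norm_coe_le_norm _ t
                    _ = 1 := fourier_norm _
              _ = ‖g‖ := one_mul _
        _ = ‖g‖ := by rw [measure_univ, ENNReal.toReal_one, mul_one])

@[simp] lemma fc_apply (n : ℤ) (g : C(𝕋, ℂ)) : fc n g = fourierCoeff (⇑g) n := rfl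

lemma integral_fourier (k : ℤ) :
    (∫ x : 𝕋, fourier k x ∂AddCircle.haarAddCircle) = if k = 0 then 1 else 0 := by
  split_ifs with h
  · subst h
    have : (fun x : 𝕋 => fourier (0:ℤ) x) = fun _ => (1:ℂ) := by ext1 x; exact fourier_zero
    rw [this, integral_const, probReal_univ, one_smul]
  · exact integral_eq_zero_of_add_right_eq_neg
      (fourier_add_half_inv_index h Real.two_pi_pos)

lemma fourierCoeff_one (n : ℤ) :
    fourierCoeff (⇑(1 : C(𝕋, ℂ))) n = if n = 0 then 1 else 0 := by
  rw [fourierCoeff]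
  simp only [ContinuousMap.coe_one, Pi.one_apply, smul_eq_mul, mul_one]
  rw [integral_fourier]
  by_cases h : n = 0 <;> simp [h]

lemma fourierCoeff_fourier_mul (m : ℤ) (g : C(𝕋, ℂ)) (n : ℤ) :
    fourierCoeff (⇑((fourier m : C(𝕋, ℂ)) * g)) n = fourierCoeff (⇑g) (n - m) := by
  simp only [fourierCoeff, ContinuousMap.coe_mul, Pi.mul_apply, smul_eq_mul]
  congr 1
  ext t
  rw [← mul_assoc, ← fourier_add]
  congr 2
  ring


lemma fourierCoeff_add' (f g : C(𝕋, ℂ)) (n : ℤ) :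
    fourierCoeff (⇑(f + g)) n = fourierCoeff (⇑f) n + fourierCoeff (⇑g) n :=
  map_add (fc n) f g

lemma fourierCoeff_sub' (f g : C(𝕋, ℂ)) (n : ℤ) :
    fourierCoeff (⇑(f - g)) n = fourierCoeff (⇑f) n - fourierCoeff (⇑g) n :=
  map_sub (fc n) f g

/-- Rudin–Shapiro polynomial pair. -/
def PQ : ℕ → C(𝕋, ℂ) × C(𝕋, ℂ)
  | 0 => (1, 1)
  | (k+1) => ((PQ k).1 + (fourier ((2:ℤ)^k) : C(𝕋, ℂ)) * (PQ k).2,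
              (PQ k).1 - (fourier ((2:ℤ)^k) : C(𝕋, ℂ)) * (PQ k).2)

lemma norm_fourier_apply (m : ℤ) (x : 𝕋) : ‖(fourier m : C(𝕋, ℂ)) x‖ = 1 := by
  rw [fourier_apply, Circle.norm_coe]

lemma PQ_sq (k : ℕ) (x : 𝕋) :
    ‖(PQ k).1 x‖ * ‖(PQ k).1 x‖ + ‖(PQ k).2 x‖ * ‖(PQ k).2 x‖ = 2 ^ (k+1) := by
  induction k with
  | zero => norm_num [PQ]
  | succ k ih =>
    have hpar := parallelogram_law_with_norm ℂ ((PQ k).1 x)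
      ((fourier ((2:ℤ)^k) : C(𝕋, ℂ)) x * (PQ k).2 x)
    have hn : ‖(fourier ((2:ℤ)^k) : C(𝕋, ℂ)) x * (PQ k).2 x‖ = ‖(PQ k).2 x‖ := by
      rw [norm_mul, norm_fourier_apply, one_mul]
    simp only [PQ, ContinuousMap.add_apply, ContinuousMap.sub_apply, ContinuousMap.mul_apply]
    rw [hn] at hpar
    linear_combination hpar + 2 * ih

lemma PQ_fst_norm_le (k : ℕ) : ‖(PQ k).1‖ ≤ Real.sqrt 2 * (Real.sqrt 2) ^ k := by
  have hs : (0:ℝ) ≤ Real.sqrt 2 := Real.sqrt_nonneg 2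
  apply (ContinuousMap.norm_le _ (by positivity)).mpr
  intro x
  have h := PQ_sq k x
  have hsq : (Real.sqrt 2 * (Real.sqrt 2) ^ k) * (Real.sqrt 2 * (Real.sqrt 2) ^ k)
      = 2 ^ (k+1) := by
    have h2 : Real.sqrt 2 * Real.sqrt 2 = 2 := Real.mul_self_sqrt (by norm_num)
    calc (Real.sqrt 2 * (Real.sqrt 2) ^ k) * (Real.sqrt 2 * (Real.sqrt 2) ^ k)
        = (Real.sqrt 2 * Real.sqrt 2) * (Real.sqrt 2 * Real.sqrt 2) ^ k := by ring
      _ = 2 ^ (k+1) := by rw [h2, pow_succ]; ring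
  have hB : (0:ℝ) ≤ Real.sqrt 2 * (Real.sqrt 2) ^ k := by positivity
  have h1 : ‖(PQ k).1 x‖ * ‖(PQ k).1 x‖
      ≤ (Real.sqrt 2 * (Real.sqrt 2) ^ k) * (Real.sqrt 2 * (Real.sqrt 2) ^ k) := by
    rw [hsq]; nlinarith [mul_self_nonneg ‖(PQ k).2 x‖]
  exact (mul_self_le_mul_self_iff (norm_nonneg _) hB).mpr h1


lemma PQ_coeff (k : ℕ) (n : ℤ) :
    ((0 ≤ n ∧ n < 2^k) →
      ‖fourierCoeff (⇑(PQ k).1) n‖ = 1 ∧ ‖fourierCoeff (⇑(PQ k).2) n‖ = 1) ∧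
    (¬(0 ≤ n ∧ n < 2^k) →
      fourierCoeff (⇑(PQ k).1) n = 0 ∧ fourierCoeff (⇑(PQ k).2) n = 0) := by
  induction k generalizing n with
  | zero =>
    constructor
    · rintro ⟨h0, h1⟩
      have hn : n = 0 := by omega
      subst hn
      refine ⟨?_, ?_⟩ <;>
        · show ‖fourierCoeff (⇑(1 : C(𝕋, ℂ))) 0‖ = 1
          rw [fourierCoeff_one]; norm_num
    · intro h
      have hn : n ≠ 0 := by omega
      refine ⟨?_, ?_⟩ <;>
        · show fourierCoeff (⇑(1 : C(𝕋, ℂ))) n = 0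
          rw [fourierCoeff_one, if_neg hn]
  | succ k ih =>
    have hm : (0:ℤ) < 2^k := by positivity
    have hsucc : (2:ℤ)^(k+1) = 2^k + 2^k := by rw [pow_succ]; ring
    have e1 : fourierCoeff (⇑(PQ (k+1)).1) n
        = fourierCoeff (⇑(PQ k).1) n + fourierCoeff (⇑(PQ k).2) (n - 2^k) := by
      show fourierCoeff (⇑((PQ k).1 + (fourier ((2:ℤ)^k) : C(𝕋, ℂ)) * (PQ k).2)) n = _
      rw [fourierCoeff_add', fourierCoeff_fourier_mul]
    have e2 : fourierCoeff (⇑(PQ (k+1)).2) n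
        = fourierCoeff (⇑(PQ k).1) n - fourierCoeff (⇑(PQ k).2) (n - 2^k) := by
      show fourierCoeff (⇑((PQ k).1 - (fourier ((2:ℤ)^k) : C(𝕋, ℂ)) * (PQ k).2)) n = _
      rw [fourierCoeff_sub', fourierCoeff_fourier_mul]
    constructor
    · rintro ⟨h0, h1⟩
      by_cases hlo : n < 2^k
      · have hz : fourierCoeff (⇑(PQ k).2) (n - 2^k) = 0 :=
          ((ih (n - 2^k)).2 (by omega)).2
        have h1' := ((ih n).1 ⟨h0, hlo⟩).1
        rw [e1, e2, hz, add_zero, sub_zero]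
        exact ⟨h1', h1'⟩
      · have hz : fourierCoeff (⇑(PQ k).1) n = 0 := ((ih n).2 (by omega)).1
        have h2' := ((ih (n - 2^k)).1 ⟨by omega, by omega⟩).2
        rw [e1, e2, hz, zero_add, zero_sub, norm_neg]
        exact ⟨h2', h2'⟩
    · intro h
      have hz1 : fourierCoeff (⇑(PQ k).1) n = 0 := ((ih n).2 (by omega)).1
      have hz2 : fourierCoeff (⇑(PQ k).2) (n - 2^k) = 0 := ((ih (n - 2^k)).2 (by omega)).2
      rw [e1, e2, hz1, hz2]
      norm_num


/-- coefficient size -/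
def c (k : ℕ) : ℝ := ((Real.sqrt 2) ^ k * ((k:ℝ)+1)^2)⁻¹

lemma sqrt2_pos : (0:ℝ) < Real.sqrt 2 := Real.sqrt_pos.mpr (by norm_num)

lemma c_pos (k : ℕ) : 0 < c k := by
  have := sqrt2_pos; unfold c; positivity

/-- the building blocks -/
def g (k : ℕ) : C(𝕋, ℂ) := ((c k : ℝ) : ℂ) • ((fourier ((2:ℤ)^k) : C(𝕋, ℂ)) * (PQ k).1)

lemma norm_g_le (k : ℕ) : ‖g k‖ ≤ Real.sqrt 2 * (((k:ℝ)+1)^2)⁻¹ := by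
  have hs := sqrt2_pos
  have hck := c_pos k
  rw [g, norm_smul]
  have h1 : ‖((c k : ℝ) : ℂ)‖ = c k := by
    rw [Complex.norm_real, Real.norm_eq_abs, abs_of_pos hck]
  rw [h1]
  calc c k * ‖(fourier ((2:ℤ)^k) : C(𝕋, ℂ)) * (PQ k).1‖
      ≤ c k * (1 * (Real.sqrt 2 * (Real.sqrt 2) ^ k)) := by
        apply mul_le_mul_of_nonneg_left _ hck.le
        calc ‖(fourier ((2:ℤ)^k) : C(𝕋, ℂ)) * (PQ k).1‖
            ≤ ‖(fourier ((2:ℤ)^k) : C(𝕋, ℂ))‖ * ‖(PQ k).1‖ := norm_mul_le _ _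
          _ ≤ 1 * (Real.sqrt 2 * (Real.sqrt 2) ^ k) := by
              apply mul_le_mul (le_of_eq (fourier_norm _)) (PQ_fst_norm_le k)
                (norm_nonneg _) zero_le_one
    _ = Real.sqrt 2 * (((k:ℝ)+1)^2)⁻¹ := by
        unfold c
        rw [mul_inv, one_mul]
        field_simp
--
lemma summable_inv_pow (m : ℕ) (hm : 1 < m) :
    Summable (fun k : ℕ => (((k:ℝ)+1)^m)⁻¹) := by
  have h := (Real.summable_one_div_nat_pow (p := m)).mpr hm
  rw [← summable_nat_add_iff 1] at h
  refine h.congr fun k => ?_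
  push_cast
  rw [one_div]

lemma summable_g : Summable g := by
  apply Summable.of_norm_bounded ((summable_inv_pow 2 one_lt_two).mul_left (Real.sqrt 2))
  exact norm_g_le

/-- the Carleman function -/
def f : C(𝕋, ℂ) := ∑' k, g k

lemma coeff_g (k : ℕ) (n : ℤ) :
    fourierCoeff (⇑(g k)) n = ((c k : ℝ) : ℂ) * fourierCoeff (⇑(PQ k).1) (n - 2^k) := by
  rw [← fc_apply, g, _root_.map_smul, fc_apply, fourierCoeff_fourier_mul, smul_eq_mul]

lemma coeff_f (n : ℤ) :
    fourierCoeff (⇑f) n = ∑' k, ((c k : ℝ) : ℂ) * fourierCoeff (⇑(PQ k).1) (n - 2^k) := by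
  rw [← fc_apply, f, ContinuousLinearMap.map_tsum _ summable_g]
  exact tsum_congr fun k => by rw [fc_apply, coeff_g]

lemma pow_le_pow_int {a b : ℕ} (h : a ≤ b) : (2:ℤ)^a ≤ 2^b :=
  pow_le_pow_right₀ (by norm_num) h

lemma coeff_f_zero (n : ℤ) (hn : n ≤ 0) : fourierCoeff (⇑f) n = 0 := by
  rw [coeff_f]
  have : ∀ k : ℕ, ((c k : ℝ) : ℂ) * fourierCoeff (⇑(PQ k).1) (n - 2^k) = 0 := by
    intro k
    have hm : (0:ℤ) < 2^k := by positivity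
    have hz : fourierCoeff (⇑(PQ k).1) (n - 2^k) = 0 := ((PQ_coeff k _).2 (by omega)).1
    rw [hz, mul_zero]
  simp only [this, tsum_zero]

lemma coeff_f_block (K : ℕ) (n : ℤ) (h1 : 2^K ≤ n) (h2 : n < 2^(K+1)) :
    ‖fourierCoeff (⇑f) n‖ = c K := by
  rw [coeff_f]
  have hterm : ∀ k : ℕ, k ≠ K → ((c k : ℝ) : ℂ) * fourierCoeff (⇑(PQ k).1) (n - 2^k) = 0 := by
    intro k hk
    have hm : (0:ℤ) < 2^k := by positivity
    rcases lt_or_gt_of_ne hk with h | h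
    · -- k < K : n - 2^k ≥ 2^(k+1) - 2^k = 2^k
      have hle : (2:ℤ)^(k+1) ≤ 2^K := pow_le_pow_int h
      have hsucc : (2:ℤ)^(k+1) = 2^k + 2^k := by rw [pow_succ]; ring
      have hz : fourierCoeff (⇑(PQ k).1) (n - 2^k) = 0 :=
        ((PQ_coeff k _).2 (by omega)).1
      rw [hz, mul_zero]
    · -- k > K : n - 2^k < 2^(K+1) - 2^k ≤ 0
      have hle : (2:ℤ)^(K+1) ≤ 2^k := pow_le_pow_int h
      have hz : fourierCoeff (⇑(PQ k).1) (n - 2^k) = 0 :=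
        ((PQ_coeff k _).2 (by omega)).1
      rw [hz, mul_zero]
  rw [tsum_eq_single K hterm]
  have hsucc : (2:ℤ)^(K+1) = 2^K + 2^K := by rw [pow_succ]; ring
  have hcn : ‖fourierCoeff (⇑(PQ K).1) (n - 2^K)‖ = 1 :=
    ((PQ_coeff K _).1 ⟨by omega, by omega⟩).1
  rw [norm_mul, hcn, mul_one, Complex.norm_real, Real.norm_eq_abs, abs_of_pos (c_pos K)]


lemma c_def (k : ℕ) : c k = ((Real.sqrt 2) ^ k * ((k:ℝ)+1)^2)⁻¹ := rfl

/-- index embedding for the dyadic blocks -/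
def j (x : Σ k : ℕ, Fin (2^k)) : ℤ := ((2^x.1 + (x.2 : ℕ) : ℕ) : ℤ)

lemma j_inj : Function.Injective j := by
  rintro ⟨k, i⟩ ⟨l, m⟩ h
  unfold j at h
  simp only at h
  have h' : 2^k + (i:ℕ) = 2^l + (m:ℕ) := by exact_mod_cast h
  have hkl : k = l := by
    by_contra hne
    rcases lt_or_gt_of_ne hne with hlt | hlt
    · have h1 : 2^k + (i:ℕ) < 2^(k+1) := by
        have := i.2; rw [pow_succ]; omega
      have h2 : (2:ℕ)^(k+1) ≤ 2^l := Nat.pow_le_pow_right (by norm_num) hlt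
      omega
    · have h1 : 2^l + (m:ℕ) < 2^(l+1) := by
        have := m.2; rw [pow_succ]; omega
      have h2 : (2:ℕ)^(l+1) ≤ 2^k := Nat.pow_le_pow_right (by norm_num) hlt
      omega
  subst hkl
  have : (i:ℕ) = (m:ℕ) := by omega
  exact Sigma.ext rfl (by simpa using Fin.ext this)

lemma mem_range_j (n : ℤ) (hn : 1 ≤ n) : n ∈ Set.range j := by
  set m := n.toNat with hm
  have hm1 : 1 ≤ m := by omega
  set K := Nat.log 2 m with hK
  have h1 : 2^K ≤ m := Nat.pow_log_le_self 2 (by omega)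
  have h2 : m < 2^(K+1) := Nat.lt_pow_succ_log_self (by norm_num) m
  refine ⟨⟨K, ⟨m - 2^K, by rw [pow_succ] at h2; omega⟩⟩, ?_⟩
  unfold j
  simp only
  omega

lemma norm_coeff_j (k : ℕ) (i : Fin (2^k)) : ‖fourierCoeff (⇑f) (j ⟨k, i⟩)‖ = c k := by
  apply coeff_f_block
  · unfold j; simp only; push_cast; omega
  · unfold j; simp only
    have := i.2
    have : ((2:ℤ)^(k+1)) = ((2^(k+1) : ℕ) : ℤ) := by push_cast; ring
    rw [this]
    have hlt : 2^k + (i:ℕ) < 2^(k+1) := by have := i.2; rw [pow_succ]; omega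
    exact_mod_cast hlt

lemma coeff_not_range (n : ℤ) (hn : n ∉ Set.range j) : fourierCoeff (⇑f) n = 0 := by
  apply coeff_f_zero
  by_contra h
  exact hn (mem_range_j n (by omega))

theorem part1 : Summable fun n : ℤ => ‖fourierCoeff (⇑f) n‖ ^ (2:ℝ) := by
  have hconv : ∀ x : ℝ, 0 ≤ x → x ^ (2:ℝ) = x ^ (2:ℕ) := by
    intro x hx
    rw [show ((2:ℝ)) = ((2:ℕ):ℝ) by norm_num, Real.rpow_natCast]
  rw [← Function.Injective.summable_iff j_inj (by
    intro n hn
    rw [coeff_not_range n hn]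
    simp [Real.zero_rpow (two_ne_zero)])]
  have hval : ∀ x : Σ k : ℕ, Fin (2^k),
      ((fun n : ℤ => ‖fourierCoeff (⇑f) n‖ ^ (2:ℝ)) ∘ j) x = c x.1 ^ (2:ℕ) := by
    rintro ⟨k, i⟩
    simp only [Function.comp_apply, norm_coeff_j k i]
    exact hconv _ (c_pos k).le
  rw [summable_congr hval]
  rw [summable_sigma_of_nonneg (fun x => by positivity)]
  constructor
  · intro k; exact .of_finite
  · have hfib : ∀ k : ℕ, (∑' _ : Fin (2^k), c k ^ (2:ℕ)) = (((k:ℝ)+1)^4)⁻¹ := by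
      intro k
      rw [tsum_fintype, Finset.sum_const, Finset.card_univ, Fintype.card_fin, nsmul_eq_mul]
      rw [c_def]
      have key : ((Real.sqrt 2)^k)^2 = 2^k := by
        rw [← pow_mul, mul_comm, pow_mul, Real.sq_sqrt (by norm_num : (0:ℝ) ≤ 2)]
      have hne : ((2:ℝ))^k ≠ 0 := by positivity
      have hne2 : ((k:ℝ)+1) ≠ 0 := by positivity
      rw [inv_pow, mul_pow, key]
      rw [show (((k:ℝ)+1)^2)^2 = ((k:ℝ)+1)^4 by ring]
      field_simp
      norm_num
    rw [summable_congr hfib]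
    exact summable_inv_pow 4 (by norm_num)

open Filter in
theorem part2 (p : ℝ) (hp0 : 0 < p) (hp2 : p < 2) :
    ¬ Summable fun n : ℤ => ‖fourierCoeff (⇑f) n‖ ^ p := by
  intro hs
  set s := Real.sqrt 2 with hsdef
  have hs1 : 1 < s := by
    have := Real.sqrt_lt_sqrt (by norm_num) (by norm_num : (1:ℝ) < 2)
    rwa [Real.sqrt_one] at this
  have hs0 : (0:ℝ) < s := lt_trans one_pos hs1
  have hsp_pos : 0 < s ^ p := Real.rpow_pos_of_pos hs0 p
  have hsp_lt : s ^ p < 2 := by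
    have h1 : s ^ p < s ^ (2:ℝ) := Real.rpow_lt_rpow_of_exponent_lt hs1 hp2
    rwa [show s ^ (2:ℝ) = s ^ (2:ℕ) by rw [← Real.rpow_natCast s 2]; norm_num,
      Real.sq_sqrt (by norm_num : (0:ℝ) ≤ 2)] at h1
  set r := 2 / s ^ p with hrdef
  have hr1 : 1 < r := (one_lt_div hsp_pos).mpr hsp_lt
  have hr0 : 0 < r := lt_trans one_pos hr1
  -- pull back the summability along `j`
  have hcomp : Summable ((fun n : ℤ => ‖fourierCoeff (⇑f) n‖ ^ p) ∘ j) :=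
    hs.comp_injective j_inj
  have hval : ∀ x : Σ k : ℕ, Fin (2^k),
      ((fun n : ℤ => ‖fourierCoeff (⇑f) n‖ ^ p) ∘ j) x = c x.1 ^ p := by
    rintro ⟨k, i⟩
    simp only [Function.comp_apply, norm_coeff_j k i]
  rw [summable_congr hval] at hcomp
  have hA : Summable (fun k : ℕ => (2:ℝ)^k * c k ^ p) := by
    have h2 := ((summable_sigma_of_nonneg (fun x => by
      exact Real.rpow_nonneg (c_pos x.1).le p)).mp hcomp).2
    refine h2.congr fun k => ?_
    rw [tsum_fintype]
    rw [show (∑ b : Fin (2^k), c (⟨k, b⟩ : Σ k : ℕ, Fin (2^k)).fst ^ p)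
        = ∑ _b : Fin (2^k), c k ^ p from rfl]
    rw [Finset.sum_const, Finset.card_univ, Fintype.card_fin, nsmul_eq_mul]
    push_cast
    ring
  -- key algebraic identity
  have hb : ∀ k : ℕ, (0:ℝ) < (k:ℝ)+1 := fun k => by positivity
  have hAkey : ∀ k : ℕ, (2:ℝ)^k * c k ^ p = r^k * (((k:ℝ)+1)^(2*p))⁻¹ := by
    intro k
    have hXpos : (0:ℝ) < s^k := pow_pos hs0 k
    have hYpos : (0:ℝ) < ((k:ℝ)+1)^2 := by positivity
    rw [c_def, Real.inv_rpow (by positivity), Real.mul_rpow hXpos.le hYpos.le]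
    have hX : (s^k)^p = (s^p)^k := by
      rw [← Real.rpow_natCast s k, ← Real.rpow_mul hs0.le, mul_comm,
        Real.rpow_mul hs0.le, Real.rpow_natCast]
    have hY : (((k:ℝ)+1)^2)^p = ((k:ℝ)+1)^(2*p) := by
      rw [show (((k:ℝ)+1)^2) = ((k:ℝ)+1)^((2:ℕ):ℝ) by rw [Real.rpow_natCast],
        ← Real.rpow_mul (hb k).le]
      norm_num
    rw [hX, hY, hrdef, div_pow, mul_inv, div_eq_mul_inv]
    ring
  -- geometric decay sequence
  have hxnorm : ‖r⁻¹‖ < 1 := by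
    rw [Real.norm_eq_abs, abs_of_pos (by positivity)]
    exact inv_lt_one_of_one_lt₀ hr1
  have hB0 : Tendsto (fun n : ℕ => (n:ℝ)^4 * (r⁻¹)^n) atTop (nhds 0) :=
    (summable_pow_mul_geometric_of_norm_lt_one 4 hxnorm).tendsto_atTop_zero
  have hBshift : Tendsto (fun k : ℕ => (((k:ℝ)+1))^4 * (r⁻¹)^(k+1)) atTop (nhds 0) := by
    have h := hB0.comp (tendsto_add_atTop_nat 1)
    refine h.congr fun k => ?_
    simp only [Function.comp_apply]
    push_cast
    ring
  have hA0 : Tendsto (fun k : ℕ => (2:ℝ)^k * c k ^ p) atTop (nhds 0) :=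
    hA.tendsto_atTop_zero
  have hprod : Tendsto
      (fun k : ℕ => ((2:ℝ)^k * c k ^ p) * ((((k:ℝ)+1))^4 * (r⁻¹)^(k+1)))
      atTop (nhds 0) := by
    have := hA0.mul hBshift
    simpa using this
  -- but the product is bounded below by `r⁻¹ > 0`
  have hge : ∀ k : ℕ, r⁻¹ ≤ ((2:ℝ)^k * c k ^ p) * ((((k:ℝ)+1))^4 * (r⁻¹)^(k+1)) := by
    intro k
    rw [hAkey k]
    have e1 : r^k * (((k:ℝ)+1)^(2*p))⁻¹ * ((((k:ℝ)+1))^4 * (r⁻¹)^(k+1))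
        = (((k:ℝ)+1)^((4:ℝ)) * (((k:ℝ)+1)^(2*p))⁻¹) * r⁻¹ := by
      have hrk : r^k * (r⁻¹)^k = 1 := by
        rw [← mul_pow, mul_inv_cancel₀ hr0.ne', one_pow]
      have h4 : ((k:ℝ)+1)^((4:ℝ)) = (((k:ℝ)+1))^(4:ℕ) := by
        rw [show ((4:ℝ)) = ((4:ℕ):ℝ) by norm_num, Real.rpow_natCast]
      rw [h4, pow_succ r⁻¹ k]
      linear_combination ((((k:ℝ)+1)^(2*p))⁻¹ * (((k:ℝ)+1))^(4:ℕ) * r⁻¹) * hrk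
    rw [e1]
    have e2 : ((k:ℝ)+1)^((4:ℝ)) * (((k:ℝ)+1)^(2*p))⁻¹ = ((k:ℝ)+1)^((4:ℝ) - 2*p) := by
      rw [Real.rpow_sub (hb k), div_eq_mul_inv]
    rw [e2]
    have h1 : (1:ℝ) ≤ ((k:ℝ)+1)^((4:ℝ) - 2*p) := by
      have := Real.rpow_le_rpow_of_exponent_le (by simp : (1:ℝ) ≤ (k:ℝ)+1)
        (by linarith : (0:ℝ) ≤ (4:ℝ) - 2*p)
      rwa [Real.rpow_zero] at this
    nlinarith [inv_pos.mpr hr0]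
  have hev := hprod.eventually (gt_mem_nhds (by positivity : (0:ℝ) < r⁻¹))
  obtain ⟨k, hk⟩ := hev.exists
  exact absurd (hge k) (not_le.mpr hk)

end Carleman
end

/-- Carleman: there is a continuous function on the circle whose Fourier
coefficients lie in `ℓ₂` but in no `ℓ_p`, `p < 2`. -/
theorem exists_carleman_function :
    ∃ f : C(AddCircle (2 * Real.pi), ℂ),
      (Summable fun n : ℤ => ‖fourierCoeff (⇑f) n‖ ^ (2 : ℝ)) ∧
      ∀ p : ℝ, 0 < p → p < 2 → ¬ Summable fun n : ℤ => ‖fourierCoeff (⇑f) n‖ ^ p :=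
  ⟨Carleman.f, Carleman.part1, fun p hp0 hp2 => Carleman.part2 p hp0 hp2⟩
end
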